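/- arXiv:1812.01794 — 5 statements merged into one kernel-verified Lean document; each statement's English description precedes it below -/
import Mathlib

section
/- Let n ≥ 2 and m ≥ 2 be integers and let p ∈ (0,1). Then Pr[Y*_{n,m−1} > p and X_{(1),n} < p and W_{2,n} < p] · Pr[X_{(1),n} < p] ≤ Pr[Y*_{n,m−1} > p and X_{(1),n} < p] · Pr[X_{(1),n} < p and W_{2,n} < p]; equivalently, Pr[Y*_{n,m−1} > p | X_{(1),n} < p and W_{2,n} < p] ≤ Pr[Y*_{n,m−1} > p | X_{(1),n} < p]. -/
open MeasureTheory Set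

/-- The uniform distribution on `[0,1]`. -/
noncomputable def unif : Measure ℝ := volume.restrict (Set.Icc 0 1)

instance : IsProbabilityMeasure unif := by
  constructor
  simp [unif, Real.volume_Icc]

/-- The `k`-th largest entry (1-indexed) of a tuple `x : Fin n → ℝ`. -/
noncomputable def kthLargest {n : ℕ} (x : Fin n → ℝ) (k : ℕ) : ℝ :=
  if h : n - k < n then x (Tuple.sort x ⟨n - k, h⟩) else 0

/-- Given the `n` draws `x` and an independent uniform `u ∈ [0,1]`, this is the random
variable `W_{2,n}` which, conditioned on `x`, is uniform on `[X_{(2),n}, 1]`. -/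
noncomputable def Wvar {n : ℕ} (ℓ : ℕ) (x : Fin n → ℝ) (u : ℝ) : ℝ :=
  kthLargest x ℓ + u * (1 - kthLargest x ℓ)

open Classical in
/-- Using an auxiliary uniform `v ∈ [0,1]` as randomness, pick (uniformly at random when `v`
is uniform) the value `y j` for an index `j` in the set `{j | t < y j}`.  Returns `0` if
that set is empty. -/
noncomputable def pickedY {k : ℕ} (y : Fin k → ℝ) (t v : ℝ) : ℝ :=
  let S : Finset (Fin k) := Finset.univ.filter (fun j => t < y j)
  ((S.sort (· ≤ ·)).map y).getD (min (Int.toNat ⌊v * S.card⌋) (S.card - 1)) 0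

open Classical in
/-- The random variable `Y*_{n,m-1}`: it equals `0` if `Y_j < X_{(1),n}` for all `j`, and
otherwise equals `Y_J` where `J` is uniform on `{j | Y_j > X_{(1),n}}` (chosen using the
auxiliary independent uniform `v`). -/
noncomputable def Ystar {n k : ℕ} (x : Fin n → ℝ) (y : Fin k → ℝ) (v : ℝ) : ℝ :=
  if ∀ j, y j < kthLargest x 1 then 0 else pickedY y (kthLargest x 1) v

/-- The sample space: `n` i.i.d. uniforms `X`, the auxiliary uniform for `W_{2,n}`,
`m-1` i.i.d. uniforms `Y`, and the auxiliary uniform used to choose `J`, all independent. -/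
noncomputable def P₁₂ (n m : ℕ) : Measure ((Fin n → ℝ) × ℝ × (Fin (m - 1) → ℝ) × ℝ) :=
  (Measure.pi fun _ : Fin n => unif).prod
    (unif.prod ((Measure.pi fun _ : Fin (m - 1) => unif).prod unif))



section OrderStats

variable {n : ℕ}

lemma kth_one {n : ℕ} (hn : 0 < n) (x : Fin n → ℝ) (hne : (Finset.univ : Finset (Fin n)).Nonempty) :
    kthLargest x 1 = Finset.univ.sup' hne x := by
  have h : n - 1 < n := by omega
  rw [kthLargest, dif_pos h]
  apply le_antisymm
  · exact Finset.le_sup' x (Finset.mem_univ _)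
  · apply Finset.sup'_le
    intro i _
    have : x i = (x ∘ Tuple.sort x) ((Tuple.sort x).symm i) := by simp
    rw [this]
    apply Tuple.monotone_sort x
    show ((Tuple.sort x).symm i : Fin n) ≤ ⟨n - 1, h⟩
    rw [Fin.le_def]
    have := ((Tuple.sort x).symm i).isLt
    simp only []
    omega

lemma erase_nonempty {n : ℕ} (hn : 2 ≤ n) (i : Fin n) :
    ((Finset.univ : Finset (Fin n)).erase i).Nonempty := by
  have : 1 < (Finset.univ : Finset (Fin n)).card := by simp [Finset.card_univ]; omega
  have := Finset.card_erase_of_mem (Finset.mem_univ i)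
  refine Finset.card_pos.mp ?_
  rw [this]; simp [Finset.card_univ]; omega

lemma kth_two {n : ℕ} (hn : 2 ≤ n) (x : Fin n → ℝ) :
    kthLargest x 2 = Finset.univ.inf' ⟨⟨0, by omega⟩, Finset.mem_univ _⟩
      (fun i => ((Finset.univ : Finset (Fin n)).erase i).sup' (erase_nonempty hn i) x) := by
  have h : n - 2 < n := by omega
  rw [kthLargest, dif_pos h]
  set σ := Tuple.sort x with hσ
  have hmono := Tuple.monotone_sort x
  have htop : ∀ j : Fin n, x j ≤ x (σ ⟨n-1, by omega⟩) := by
    intro j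
    have : x j = (x ∘ σ) (σ.symm j) := by simp
    rw [this]
    apply hmono
    show (σ.symm j : Fin n) ≤ ⟨n-1, by omega⟩
    rw [Fin.le_def]
    have := (σ.symm j).isLt
    simp only []
    omega
  apply le_antisymm
  · -- x (σ ⟨n-2⟩) ≤ each sup' over erase i, pick i := σ ⟨n-1⟩ to get ≤ ; for ≤ direction:
    -- show x (σ ⟨n-2⟩) ≤ inf' : i.e. ∀ i, x (σ ⟨n-2⟩) ≤ sup' (erase i)
    apply Finset.le_inf'
    intro i _
    by_cases hi : i = σ ⟨n-1, by omega⟩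
    · -- then σ ⟨n-2⟩ ≠ i
      have hne2 : σ ⟨n-2, h⟩ ≠ i := by
        rw [hi]
        intro hcon
        have := σ.injective hcon
        have : (⟨n-2, h⟩ : Fin n) = ⟨n-1, by omega⟩ := this
        simp [Fin.ext_iff] at this; omega
      exact Finset.le_sup' x (Finset.mem_erase.mpr ⟨hne2, Finset.mem_univ _⟩)
    · -- σ ⟨n-1⟩ ∈ erase i, and x (σ⟨n-2⟩) ≤ x (σ⟨n-1⟩)
      have hmem : σ ⟨n-1, by omega⟩ ∈ (Finset.univ : Finset (Fin n)).erase i :=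
        Finset.mem_erase.mpr ⟨fun hcon => hi hcon.symm, Finset.mem_univ _⟩
      calc x (σ ⟨n-2, h⟩) ≤ x (σ ⟨n-1, by omega⟩) := by
            exact hmono (by exact Fin.mk_le_mk.mpr (by omega))
        _ ≤ _ := Finset.le_sup' x hmem
  · -- inf' ≤ x (σ ⟨n-2⟩): pick i := σ ⟨n-1⟩
    refine le_trans (Finset.inf'_le _ (Finset.mem_univ (σ ⟨n-1, by omega⟩))) ?_
    apply Finset.sup'_le
    intro j hj
    rcases Finset.mem_erase.mp hj with ⟨hjne, -⟩
    have : x j = (x ∘ σ) (σ.symm j) := by simp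
    rw [this]
    apply hmono
    show (σ.symm j : Fin n) ≤ ⟨n-2, h⟩
    have hlt := (σ.symm j).isLt
    have : (σ.symm j : Fin n) ≠ ⟨n-1, by omega⟩ := by
      intro hcon
      apply hjne
      have := congrArg σ hcon
      simpa using this
    rw [Fin.le_def]
    have h2 : (σ.symm j : Fin n).val ≠ n - 1 := fun hc => this (Fin.ext hc)
    simp only []
    omega

end OrderStats


lemma unif_apply (A : Set ℝ) : unif A = volume (A ∩ Icc 0 1) :=
  Measure.restrict_apply' measurableSet_Icc

lemma unif_Iio {c : ℝ} (h0 : 0 ≤ c) (h1 : c ≤ 1) : unif {u | u < c} = ENNReal.ofReal c := by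
  rw [unif_apply]
  have : {u : ℝ | u < c} ∩ Icc 0 1 = Ico 0 c := by
    ext u
    simp only [mem_inter_iff, mem_setOf_eq, mem_Icc, mem_Ico]
    constructor
    · rintro ⟨h, h2, h3⟩; exact ⟨h2, h⟩
    · rintro ⟨h2, h⟩; exact ⟨h, h2, le_trans (le_of_lt h) h1⟩
  rw [this, Real.volume_Ico, sub_zero]

lemma unif_Ioi {t : ℝ} (h0 : 0 ≤ t) : unif (Ioi t) = ENNReal.ofReal (1 - t) := by
  rw [unif_apply]
  have : Ioi t ∩ Icc 0 1 = Ioc t 1 := by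
    ext u
    simp only [mem_inter_iff, mem_Ioi, mem_Icc, mem_Ioc]
    constructor
    · rintro ⟨h, _, h3⟩; exact ⟨h, h3⟩
    · rintro ⟨h, h3⟩; exact ⟨h, le_trans h0 (le_of_lt h), h3⟩
  rw [this, Real.volume_Ioc]

lemma unif_Iic {t : ℝ} (h0 : 0 ≤ t) (h1 : t ≤ 1) : unif (Iic t) = ENNReal.ofReal t := by
  rw [unif_apply]
  have : Iic t ∩ Icc 0 1 = Icc 0 t := by
    ext u
    simp only [mem_inter_iff, mem_Iic, mem_Icc]
    constructor
    · rintro ⟨h, h2, _⟩; exact ⟨h2, h⟩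
    · rintro ⟨h2, h⟩; exact ⟨h, h2, le_trans h h1⟩
  rw [this, Real.volume_Icc, sub_zero]

lemma w_section {s p : ℝ} (hs0 : 0 ≤ s) (hsp : s < p) (hp1 : p ≤ 1) :
    unif {u | s + u * (1 - s) < p} = ENNReal.ofReal ((p - s) / (1 - s)) := by
  have hs1 : s < 1 := lt_of_lt_of_le hsp hp1
  have h : {u : ℝ | s + u * (1 - s) < p} = {u : ℝ | u < (p - s) / (1 - s)} := by
    ext u
    simp only [mem_setOf_eq]
    rw [lt_div_iff₀ (by linarith)]
    constructor <;> intro h <;> nlinarith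
  rw [h]
  refine unif_Iio (div_nonneg (by linarith) (by linarith)) ?_
  rw [div_le_one (by linarith)]
  linarith

lemma unif_vset {k i : ℕ} (hik : i < k) :
    unif {v : ℝ | min (Int.toNat ⌊v * k⌋) (k - 1) = i} = ENNReal.ofReal (1 / (k : ℝ)) := by
  have hk : 1 ≤ k := Nat.one_le_iff_ne_zero.mpr (by omega)
  have hk0 : (0 : ℝ) < k := by exact_mod_cast hk
  rw [unif_apply]
  rcases Nat.lt_or_ge (i + 1) k with hc | hc
  · -- i + 1 < k : set is [i/k, (i+1)/k)
    have hset : {v : ℝ | min (Int.toNat ⌊v * k⌋) (k - 1) = i} ∩ Icc 0 1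
        = Ico ((i : ℝ) / k) ((i + 1 : ℝ) / k) := by
      ext v
      simp only [mem_inter_iff, mem_setOf_eq, mem_Icc, mem_Ico]
      constructor
      · rintro ⟨hmin, hv0, hv1⟩
        have hfl0 : (0 : ℤ) ≤ ⌊v * k⌋ := Int.le_floor.mpr (by push_cast; positivity)
        have htn : Int.toNat ⌊v * k⌋ = i := by
          rcases le_or_gt (k - 1) (Int.toNat ⌊v * k⌋) with h | h
          · rw [min_eq_right h] at hmin; omega
          · rw [min_eq_left (le_of_lt h)] at hmin; exact hmin
        have hfl : ⌊v * k⌋ = (i : ℤ) := by omega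
        obtain ⟨hl, hr⟩ := Int.floor_eq_iff.mp hfl
        constructor
        · rw [div_le_iff₀ hk0]; exact_mod_cast hl
        · rw [lt_div_iff₀ hk0]; push_cast; push_cast at hr; linarith
      · rintro ⟨hl, hr⟩
        have hv0 : 0 ≤ v := le_trans (by positivity) hl
        have hv1 : v ≤ 1 := by
          have : ((i:ℝ) + 1) / k ≤ 1 := by
            rw [div_le_one hk0]; exact_mod_cast Nat.le_of_lt hc
          linarith
        have hfl : ⌊v * k⌋ = (i : ℤ) := by
          rw [Int.floor_eq_iff]
          constructor
          · push_cast; rw [div_le_iff₀ hk0] at hl; linarith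
          · push_cast; rw [lt_div_iff₀ hk0] at hr; push_cast at hr; linarith
        refine ⟨?_, hv0, hv1⟩
        rw [hfl]
        simp only [Int.toNat_natCast]
        omega
    rw [hset, Real.volume_Ico]
    congr 1
    field_simp
    ring
  · -- i = k - 1 : set is [i/k, 1]
    have hik' : i = k - 1 := by omega
    have hset : {v : ℝ | min (Int.toNat ⌊v * k⌋) (k - 1) = i} ∩ Icc 0 1
        = Icc ((i : ℝ) / k) 1 := by
      ext v
      simp only [mem_inter_iff, mem_setOf_eq, mem_Icc]
      constructor
      · rintro ⟨hmin, hv0, hv1⟩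
        have h1 : i ≤ Int.toNat ⌊v * k⌋ := by
          have := min_le_left (Int.toNat ⌊v * k⌋) (k - 1)
          have := min_le_right (Int.toNat ⌊v * k⌋) (k - 1)
          omega
        have hfl0 : (0 : ℤ) ≤ ⌊v * k⌋ := Int.le_floor.mpr (by push_cast; positivity)
        have h2 : ((i : ℤ)) ≤ ⌊v * k⌋ := by omega
        have h3 : ((i : ℝ)) ≤ v * k := by exact_mod_cast Int.le_floor.mp h2
        refine ⟨?_, hv1⟩
        rw [div_le_iff₀ hk0]; linarith
      · rintro ⟨hl, hv1⟩
        have hv0 : 0 ≤ v := le_trans (by positivity) hl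
        have h3 : ((i : ℝ)) ≤ v * k := by rw [div_le_iff₀ hk0] at hl; linarith
        have h2 : ((i : ℤ)) ≤ ⌊v * k⌋ := Int.le_floor.mpr (by exact_mod_cast h3)
        have h1 : k - 1 ≤ Int.toNat ⌊v * k⌋ := by omega
        refine ⟨?_, hv0, hv1⟩
        rw [min_eq_right h1]
        omega
    rw [hset, Real.volume_Icc]
    congr 1
    rw [hik']
    have : ((k : ℝ) - 1) / k = (↑(k-1) : ℝ) / k := by push_cast [Nat.cast_sub hk]; ring
    rw [← this]
    field_simp
    ring


lemma pi_restrict {ι : Type*} [Fintype ι] (μ : ι → Measure ℝ) [∀ i, SigmaFinite (μ i)]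
    (s : ι → Set ℝ) (hs : ∀ i, MeasurableSet (s i)) :
    (Measure.pi μ).restrict (Set.pi univ s) = Measure.pi (fun i => (μ i).restrict (s i)) := by
  haveI : ∀ i, SigmaFinite ((μ i).restrict (s i)) := fun i => inferInstance
  refine (Measure.pi_eq (μ := fun i => (μ i).restrict (s i)) (fun T hT => ?_)).symm
  rw [Measure.restrict_apply (MeasurableSet.pi countable_univ (fun i _ => hT i))]
  rw [← Set.pi_inter_distrib, Measure.pi_pi]
  exact Finset.prod_congr rfl fun i _ => (Measure.restrict_apply (hT i)).symm

lemma finset_measurable_inf' {ι δ : Type*} [MeasurableSpace δ] {s : Finset ι}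
    (hs : s.Nonempty) {f : ι → δ → ℝ} (hf : ∀ n ∈ s, Measurable (f n)) :
    Measurable (s.inf' hs f) :=
  Finset.inf'_induction hs _ (fun _f hf _g hg => hf.inf hg) fun n hn => hf n hn



section Harris

lemma integrable_of_bdd {α : Type*} [MeasurableSpace α] {μ : Measure α} [IsFiniteMeasure μ]
    {f : α → ℝ} (hm : AEStronglyMeasurable f μ) {C : ℝ} (hb : ∀ x, |f x| ≤ C) :
    Integrable f μ :=
  ⟨hm, HasFiniteIntegral.of_bounded (C := C) (ae_of_all _ (by simpa [Real.norm_eq_abs] using hb))⟩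

lemma cheb1D {μ : Measure ℝ} [IsFiniteMeasure μ] {F G : ℝ → ℝ}
    (hF : Monotone F) (hG : Antitone G)
    (hFi : Integrable F μ) (hGi : Integrable G μ)
    (hFGi : Integrable (fun a => F a * G a) μ) :
    (∫ a, F a * G a ∂μ) * (μ Set.univ).toReal ≤ (∫ a, F a ∂μ) * ∫ a, G a ∂μ := by
  have h11 : Integrable (fun z : ℝ × ℝ => F z.1 * G z.1) (μ.prod μ) := by
    have := hFGi.mul_prod (integrable_const (1 : ℝ)) (ν := μ)
    simpa using this
  have h22 : Integrable (fun z : ℝ × ℝ => F z.2 * G z.2) (μ.prod μ) := by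
    have := (integrable_const (1 : ℝ)).mul_prod hFGi (μ := μ)
    simpa using this
  have h12 : Integrable (fun z : ℝ × ℝ => F z.1 * G z.2) (μ.prod μ) := hFi.mul_prod hGi
  have h21 : Integrable (fun z : ℝ × ℝ => F z.2 * G z.1) (μ.prod μ) := by
    have := hGi.mul_prod hFi (ν := μ)
    simpa [mul_comm] using this
  have key : ∫ z : ℝ × ℝ, (F z.1 - F z.2) * (G z.1 - G z.2) ∂(μ.prod μ) ≤ 0 := by
    apply integral_nonpos
    rintro ⟨a, b⟩
    show (F a - F b) * (G a - G b) ≤ 0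
    rcases le_total a b with h | h
    · have h1 := hF h; have h2 := hG h; nlinarith
    · have h1 := hF h; have h2 := hG h; nlinarith
  have expand : ∫ z : ℝ × ℝ, (F z.1 - F z.2) * (G z.1 - G z.2) ∂(μ.prod μ)
      = (∫ z : ℝ × ℝ, F z.1 * G z.1 ∂(μ.prod μ)) + (∫ z : ℝ × ℝ, F z.2 * G z.2 ∂(μ.prod μ))
        - ((∫ z : ℝ × ℝ, F z.1 * G z.2 ∂(μ.prod μ)) + ∫ z : ℝ × ℝ, F z.2 * G z.1 ∂(μ.prod μ)) := by
    have hfe : (fun z : ℝ × ℝ => (F z.1 - F z.2) * (G z.1 - G z.2))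
        = fun z : ℝ × ℝ => (F z.1 * G z.1 + F z.2 * G z.2) - (F z.1 * G z.2 + F z.2 * G z.1) := by
      funext z; ring
    have e1 := integral_sub (μ := μ.prod μ)
      (f := fun z : ℝ × ℝ => F z.1 * G z.1 + F z.2 * G z.2)
      (g := fun z : ℝ × ℝ => F z.1 * G z.2 + F z.2 * G z.1) (h11.add h22) (h12.add h21)
    have e2 := integral_add (μ := μ.prod μ)
      (f := fun z : ℝ × ℝ => F z.1 * G z.1) (g := fun z : ℝ × ℝ => F z.2 * G z.2) h11 h22
    have e3 := integral_add (μ := μ.prod μ)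
      (f := fun z : ℝ × ℝ => F z.1 * G z.2) (g := fun z : ℝ × ℝ => F z.2 * G z.1) h12 h21
    rw [hfe, e1, e2, e3]
  have e11 : ∫ z : ℝ × ℝ, F z.1 * G z.1 ∂(μ.prod μ)
      = (∫ a, F a * G a ∂μ) * (μ Set.univ).toReal := by
    have := integral_prod_mul (μ := μ) (ν := μ) (f := fun a => F a * G a) (g := fun _ => (1:ℝ))
    simpa [Measure.real] using this
  have e22 : ∫ z : ℝ × ℝ, F z.2 * G z.2 ∂(μ.prod μ)
      = (μ Set.univ).toReal * ∫ a, F a * G a ∂μ := by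
    have := integral_prod_mul (μ := μ) (ν := μ) (f := fun _ => (1:ℝ)) (g := fun a => F a * G a)
    simpa [Measure.real] using this
  have e12 : ∫ z : ℝ × ℝ, F z.1 * G z.2 ∂(μ.prod μ) = (∫ a, F a ∂μ) * ∫ a, G a ∂μ :=
    integral_prod_mul (f := F) (g := G)
  have e21 : ∫ z : ℝ × ℝ, F z.2 * G z.1 ∂(μ.prod μ) = (∫ a, G a ∂μ) * ∫ a, F a ∂μ := by
    have := integral_prod_mul (μ := μ) (ν := μ) (f := G) (g := F)
    rw [← this]; congr 1; funext z; ring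
  rw [expand, e11, e22, e12, e21] at key
  linarith

end Harris

lemma fin_cons_le_cons {N : ℕ} {a a' : ℝ} {z z' : Fin N → ℝ} (ha : a ≤ a') (hz : z ≤ z') :
    (Fin.cons a z : Fin (N+1) → ℝ) ≤ Fin.cons a' z' := by
  intro j
  induction j using Fin.cases with
  | zero => simpa using ha
  | succ i => simpa using hz i

lemma pi_finite {N : ℕ} (μ : Fin N → Measure ℝ) [∀ i, IsFiniteMeasure (μ i)] :
    IsFiniteMeasure (Measure.pi μ) := by
  constructor
  rw [Measure.pi_univ]
  exact ENNReal.prod_lt_top (fun i _ => measure_lt_top (μ i) univ)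

lemma harris : ∀ (N : ℕ) (μ : Fin N → Measure ℝ), (∀ i, IsFiniteMeasure (μ i)) →
    ∀ (F G : (Fin N → ℝ) → ℝ), Monotone F → Antitone G → Measurable F → Measurable G →
    ∀ (CF CG : ℝ), (∀ x, |F x| ≤ CF) → (∀ x, |G x| ≤ CG) →
    (∫ x, F x * G x ∂(Measure.pi μ)) * ((Measure.pi μ) Set.univ).toReal ≤
      (∫ x, F x ∂(Measure.pi μ)) * ∫ x, G x ∂(Measure.pi μ) := by
  intro N
  induction N with
  | zero =>
    intro μ _ F G _ _ _ _ CF CG _ _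
    rw [Measure.pi_of_empty μ]
    simp [integral_dirac]
  | succ N IH =>
    intro μ hμf F G hF hG hFm hGm CF CG hFb hGb
    haveI := hμf
    haveI : IsFiniteMeasure (Measure.pi μ) := pi_finite μ
    set μ' : Fin N → Measure ℝ := fun j => μ ((0 : Fin (N+1)).succAbove j) with hμ'
    haveI : ∀ j, IsFiniteMeasure (μ' j) := fun j => hμf _
    haveI : IsFiniteMeasure (Measure.pi μ') := pi_finite μ'
    set π' := Measure.pi μ' with hπ'
    set e := MeasurableEquiv.piFinSuccAbove (fun _ : Fin (N+1) => ℝ) 0 with he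
    have hpres : MeasurePreserving e (Measure.pi μ) ((μ 0).prod π') :=
      measurePreserving_piFinSuccAbove μ 0
    have hpres' : MeasurePreserving e.symm ((μ 0).prod π') (Measure.pi μ) := hpres.symm
    -- transfer integrals
    have hcomp : ∀ (H : (Fin (N+1) → ℝ) → ℝ),
        ∫ z, H (e.symm z) ∂((μ 0).prod π') = ∫ x, H x ∂(Measure.pi μ) := fun H =>
      hpres'.integral_comp e.symm.measurableEmbedding H
    set F' : ℝ × (Fin N → ℝ) → ℝ := fun z => F (e.symm z) with hF'
    set G' : ℝ × (Fin N → ℝ) → ℝ := fun z => G (e.symm z) with hG'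
    have hesymm : ∀ (a : ℝ) (z : Fin N → ℝ), e.symm (a, z) = Fin.cons a z := by
      intro a z
      ext j
      rw [he]
      simp [MeasurableEquiv.piFinSuccAbove, Fin.insertNthEquiv, Fin.insertNth_zero]
    have hF'm : Measurable F' := hFm.comp e.symm.measurable
    have hG'm : Measurable G' := hGm.comp e.symm.measurable
    have hF'mono : Monotone F' := by
      rintro ⟨a, z⟩ ⟨a', z'⟩ ⟨(h1 : a ≤ a'), (h2 : z ≤ z')⟩
      simp only [hF', hesymm]
      exact hF (fin_cons_le_cons h1 h2)
    have hG'anti : Antitone G' := by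
      rintro ⟨a, z⟩ ⟨a', z'⟩ ⟨(h1 : a ≤ a'), (h2 : z ≤ z')⟩
      simp only [hG', hesymm]
      exact hG (fin_cons_le_cons h1 h2)
    have hF'b : ∀ z, |F' z| ≤ CF := fun z => hFb _
    have hG'b : ∀ z, |G' z| ≤ CG := fun z => hGb _
    have hCF0 : 0 ≤ CF := le_trans (abs_nonneg _) (hFb default)
    have hCG0 : 0 ≤ CG := le_trans (abs_nonneg _) (hGb default)
    have hFG'b : ∀ z, |F' z * G' z| ≤ CF * CG := fun z => by
      rw [abs_mul]; exact mul_le_mul (hF'b z) (hG'b z) (abs_nonneg _) hCF0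
    -- integrability on the product
    have hF'i : Integrable F' ((μ 0).prod π') :=
      integrable_of_bdd hF'm.aestronglyMeasurable hF'b
    have hG'i : Integrable G' ((μ 0).prod π') :=
      integrable_of_bdd hG'm.aestronglyMeasurable hG'b
    have hFG'i : Integrable (fun z => F' z * G' z) ((μ 0).prod π') :=
      integrable_of_bdd (hF'm.mul hG'm).aestronglyMeasurable hFG'b
    set Φ : ℝ → ℝ := fun a => ∫ z, F' (a, z) ∂π' with hΦ
    set Ψ : ℝ → ℝ := fun a => ∫ z, G' (a, z) ∂π' with hΨ
    set Ξ : ℝ → ℝ := fun a => ∫ z, F' (a, z) * G' (a, z) ∂π' with hΞ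
    set c' : ℝ := (π' Set.univ).toReal with hc'
    have hc'0 : 0 ≤ c' := ENNReal.toReal_nonneg
    have hΦm : StronglyMeasurable Φ := hF'm.stronglyMeasurable.integral_prod_right'
    have hΨm : StronglyMeasurable Ψ := hG'm.stronglyMeasurable.integral_prod_right'
    have hΞm : StronglyMeasurable Ξ := (hF'm.mul hG'm).stronglyMeasurable.integral_prod_right'
    have hΦb : ∀ a, |Φ a| ≤ CF * c' := by
      intro a
      rw [← Real.norm_eq_abs]
      exact norm_integral_le_of_norm_le_const (ae_of_all _ fun z => by
        rw [Real.norm_eq_abs]; exact hF'b _)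
    have hΨb : ∀ a, |Ψ a| ≤ CG * c' := by
      intro a
      rw [← Real.norm_eq_abs]
      exact norm_integral_le_of_norm_le_const (ae_of_all _ fun z => by
        rw [Real.norm_eq_abs]; exact hG'b _)
    have hΞb : ∀ a, |Ξ a| ≤ (CF * CG) * c' := by
      intro a
      rw [← Real.norm_eq_abs]
      exact norm_integral_le_of_norm_le_const (ae_of_all _ fun z => by
        rw [Real.norm_eq_abs]; exact hFG'b _)
    have hΦmono : Monotone Φ := by
      intro a a' haa
      apply integral_mono (integrable_of_bdd (hF'm.comp measurable_prodMk_left).aestronglyMeasurable (fun z => hF'b _))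
        (integrable_of_bdd (hF'm.comp measurable_prodMk_left).aestronglyMeasurable (fun z => hF'b _))
      intro z
      exact hF'mono ⟨haa, le_refl z⟩
    have hΨanti : Antitone Ψ := by
      intro a a' haa
      apply integral_mono (integrable_of_bdd (hG'm.comp measurable_prodMk_left).aestronglyMeasurable (fun z => hG'b _))
        (integrable_of_bdd (hG'm.comp measurable_prodMk_left).aestronglyMeasurable (fun z => hG'b _))
      intro z
      exact hG'anti ⟨haa, le_refl z⟩
    -- pointwise IH
    have hIH : ∀ a : ℝ, Ξ a * c' ≤ Φ a * Ψ a := by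
      intro a
      exact IH μ' (fun j => hμf _)
        (fun z => F' (a, z)) (fun z => G' (a, z))
        (fun z z' hzz => hF'mono ⟨le_refl a, hzz⟩)
        (fun z z' hzz => hG'anti ⟨le_refl a, hzz⟩)
        (hF'm.comp measurable_prodMk_left) (hG'm.comp measurable_prodMk_left)
        CF CG (fun z => hF'b _) (fun z => hG'b _)
    -- integrate
    have hΞi : Integrable Ξ (μ 0) := integrable_of_bdd hΞm.aestronglyMeasurable hΞb
    have hΦi : Integrable Φ (μ 0) := integrable_of_bdd hΦm.aestronglyMeasurable hΦb
    have hΨi : Integrable Ψ (μ 0) := integrable_of_bdd hΨm.aestronglyMeasurable hΨb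
    have hΦΨi : Integrable (fun a => Φ a * Ψ a) (μ 0) := by
      refine integrable_of_bdd (hΦm.mul hΨm).aestronglyMeasurable
        (C := (CF * c') * (CG * c')) (fun a => ?_)
      rw [abs_mul]
      exact mul_le_mul (hΦb a) (hΨb a) (abs_nonneg _) (mul_nonneg hCF0 hc'0)
    have step1 : (∫ a, Ξ a ∂(μ 0)) * c' ≤ ∫ a, Φ a * Ψ a ∂(μ 0) := by
      calc (∫ a, Ξ a ∂(μ 0)) * c' = ∫ a, Ξ a * c' ∂(μ 0) := (integral_mul_const c' Ξ).symm
        _ ≤ ∫ a, Φ a * Ψ a ∂(μ 0) := integral_mono (hΞi.mul_const c') hΦΨi hIH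
    have step2 : (∫ a, Φ a * Ψ a ∂(μ 0)) * ((μ 0) Set.univ).toReal
        ≤ (∫ a, Φ a ∂(μ 0)) * ∫ a, Ψ a ∂(μ 0) :=
      cheb1D hΦmono hΨanti hΦi hΨi hΦΨi
    -- identify integrals
    have iFG : ∫ x, F x * G x ∂(Measure.pi μ) = ∫ a, Ξ a ∂(μ 0) := by
      rw [← hcomp (fun x => F x * G x)]
      exact integral_prod _ hFG'i
    have iF : ∫ x, F x ∂(Measure.pi μ) = ∫ a, Φ a ∂(μ 0) := by
      rw [← hcomp F]; exact integral_prod _ hF'i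
    have iG : ∫ x, G x ∂(Measure.pi μ) = ∫ a, Ψ a ∂(μ 0) := by
      rw [← hcomp G]; exact integral_prod _ hG'i
    have iuniv : ((Measure.pi μ) Set.univ).toReal = ((μ 0) Set.univ).toReal * c' := by
      have h1 : ((μ 0).prod π') Set.univ = (μ 0) Set.univ * π' Set.univ := by
        rw [← Set.univ_prod_univ, Measure.prod_prod]
      have h2 : (Measure.pi μ) Set.univ = ((μ 0).prod π') Set.univ := by
        rw [← hpres.map_eq, MeasurableEquiv.map_apply]
        simp
      rw [h2, h1, ENNReal.toReal_mul]
    rw [iFG, iF, iG, iuniv]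
    calc (∫ a, Ξ a ∂(μ 0)) * (((μ 0) Set.univ).toReal * c')
        = ((∫ a, Ξ a ∂(μ 0)) * c') * ((μ 0) Set.univ).toReal := by ring
      _ ≤ (∫ a, Φ a * Ψ a ∂(μ 0)) * ((μ 0) Set.univ).toReal :=
          mul_le_mul_of_nonneg_right step1 ENNReal.toReal_nonneg
      _ ≤ (∫ a, Φ a ∂(μ 0)) * ∫ a, Ψ a ∂(μ 0) := step2

lemma getD_map_sort {mm : ℕ} (hmm : 1 ≤ mm) (A : Finset (Fin mm)) (y : Fin mm → ℝ) {i : ℕ}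
    (hi : i < A.card) :
    ((A.sort (· ≤ ·)).map y).getD i 0 = y ((A.sort (· ≤ ·)).getD i ⟨0, hmm⟩) := by
  have hlen : (A.sort (· ≤ ·)).length = A.card := Finset.length_sort _
  have h1 : i < ((A.sort (· ≤ ·)).map y).length := by simpa [hlen]
  have h2 : i < (A.sort (· ≤ ·)).length := by simpa [hlen]
  rw [List.getD_eq_getElem _ _ h1, List.getD_eq_getElem _ _ h2, List.getElem_map]

lemma sortIdx_mem {mm : ℕ} (hmm : 1 ≤ mm) (A : Finset (Fin mm)) {i : ℕ} (hi : i < A.card) :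
    (A.sort (· ≤ ·)).getD i ⟨0, hmm⟩ ∈ A := by
  have hlen : (A.sort (· ≤ ·)).length = A.card := Finset.length_sort _
  have h2 : i < (A.sort (· ≤ ·)).length := by simpa [hlen]
  rw [List.getD_eq_getElem _ _ h2]
  exact (Finset.mem_sort (α := Fin mm) (· ≤ ·)).mp (List.getElem_mem h2)

open Classical in
lemma ystar_mem_iff {n mm : ℕ} (x : Fin n → ℝ) {p : ℝ} (hp0 : 0 < p)
    (y : Fin mm → ℝ) (v : ℝ) :
    p < Ystar x y v ↔
    ∃ A ∈ (Finset.univ : Finset (Fin mm)).powerset, ∃ i ∈ Finset.range A.card,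
      ((∀ j ∈ A, kthLargest x 1 < y j) ∧ (∀ j ∉ A, y j ≤ kthLargest x 1) ∧
       min (Int.toNat ⌊v * A.card⌋) (A.card - 1) = i ∧
       p < ((A.sort (· ≤ ·)).map y).getD i 0) := by
  set t := kthLargest x 1 with ht
  constructor
  · intro h
    rw [Ystar] at h
    by_cases hall : ∀ j, y j < t
    · rw [if_pos hall] at h; linarith
    · rw [if_neg hall] at h
      rw [pickedY] at h
      set S : Finset (Fin mm) := Finset.univ.filter (fun j => t < y j) with hS
      by_cases hSe : S = ∅
      · rw [hSe] at h
        simp at h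
        linarith
      · have hcard : 1 ≤ S.card := Nat.one_le_iff_ne_zero.mpr (by
          intro hc; exact hSe (Finset.card_eq_zero.mp hc))
        refine ⟨S, Finset.mem_powerset.mpr (Finset.subset_univ S), 
          min (Int.toNat ⌊v * S.card⌋) (S.card - 1), Finset.mem_range.mpr (by omega), ?_, ?_, rfl, h⟩
        · intro j hj
          exact (Finset.mem_filter.mp hj).2
        · intro j hj
          by_contra hcon
          exact hj (Finset.mem_filter.mpr ⟨Finset.mem_univ _, not_le.mp hcon⟩)
  · rintro ⟨A, -, i, hi, h1, h2, h3, h4⟩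
    rw [Finset.mem_range] at hi
    have hSA : Finset.univ.filter (fun j => t < y j) = A := by
      ext j
      simp only [Finset.mem_filter, Finset.mem_univ, true_and]
      constructor
      · intro hj
        by_contra hcon
        exact absurd hj (not_lt.mpr (h2 j hcon))
      · intro hj; exact h1 j hj
    have hAne : A.Nonempty := Finset.card_pos.mp (by omega)
    obtain ⟨j0, hj0⟩ := hAne
    have hnall : ¬ ∀ j, y j < t := fun hall => absurd (hall j0) (not_lt.mpr (le_of_lt (h1 j0 hj0)))
    rw [Ystar, if_neg hnall, pickedY]
    rw [hSA, h3]
    exact h4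

-- real binomial-type identity
lemma sum_subsets_id {mm : ℕ} {t : ℝ} (ht1 : t < 1) :
    ∑ A ∈ (Finset.univ : Finset (Fin mm)).powerset,
      (if A = ∅ then 0 else (1 - t) ^ (A.card - 1) * t ^ (mm - A.card))
    = ∑ j ∈ Finset.range mm, t ^ j := by
  have hne : (1 : ℝ) - t ≠ 0 := ne_of_gt (by linarith)
  apply mul_left_cancel₀ hne
  have hfull : ∑ A ∈ (Finset.univ : Finset (Fin mm)).powerset,
      (1 - t) ^ A.card * t ^ (mm - A.card) = ((1 - t) + t) ^ mm := by
    have h := Finset.prod_add (fun _ : Fin mm => (1 - t)) (fun _ : Fin mm => t) Finset.univ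
    rw [Finset.prod_const] at h
    rw [Finset.card_univ, Fintype.card_fin] at h
    rw [h]
    apply Finset.sum_congr rfl
    intro A hA
    rw [Finset.prod_const, Finset.prod_const, Finset.card_sdiff_of_subset (Finset.mem_powerset.mp hA),
      Finset.card_univ, Fintype.card_fin]
  have hL : (1 - t) * ∑ A ∈ (Finset.univ : Finset (Fin mm)).powerset,
      (if A = ∅ then 0 else (1 - t) ^ (A.card - 1) * t ^ (mm - A.card))
      = ∑ A ∈ (Finset.univ : Finset (Fin mm)).powerset,
        ((1 - t) ^ A.card * t ^ (mm - A.card) - (if A = ∅ then t ^ mm else 0)) := by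
    rw [Finset.mul_sum]
    apply Finset.sum_congr rfl
    intro A _
    by_cases hA : A = ∅
    · simp [hA]
    · rw [if_neg hA, if_neg hA, sub_zero]
      have hc : 1 ≤ A.card := Nat.one_le_iff_ne_zero.mpr
        (fun hc => hA (Finset.card_eq_zero.mp hc))
      rw [← mul_assoc, ← pow_succ']
      congr 2
      omega
  rw [hL, Finset.sum_sub_distrib, hfull, Finset.sum_ite_eq'
    (Finset.univ : Finset (Fin mm)).powerset (∅ : Finset (Fin mm)) (fun _ => t ^ mm)]
  rw [if_pos (Finset.mem_powerset.mpr (Finset.empty_subset _))]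
  have : (1 : ℝ) - t + t = 1 := by ring
  rw [this, one_pow]
  calc 1 - t ^ mm = -((∑ j ∈ Finset.range mm, t ^ j) * (t - 1)) := by
        rw [geom_sum_mul]; ring
    _ = (1 - t) * ∑ j ∈ Finset.range mm, t ^ j := by ring

open Classical in
lemma ystar_section {n mm : ℕ} (hmm : 1 ≤ mm) (x : Fin n → ℝ) {p : ℝ}
    (hp0 : 0 < p) (hp1 : p < 1) (ht0 : 0 ≤ kthLargest x 1) (htp : kthLargest x 1 < p) :
    ((Measure.pi fun _ : Fin mm => unif).prod unif)
      {yv : (Fin mm → ℝ) × ℝ | p < Ystar x yv.1 yv.2}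
    = ENNReal.ofReal ((1 - p) * ∑ j ∈ Finset.range mm, (kthLargest x 1) ^ j) := by
  set t := kthLargest x 1 with htdef
  have ht1 : t < 1 := lt_trans htp hp1
  set j0 : Fin mm := ⟨0, hmm⟩ with hj0
  set Bset : Finset (Fin mm) → ℕ → Fin mm → Set ℝ := fun A i j =>
    if j = (A.sort (· ≤ ·)).getD i j0 then Ioi p else if j ∈ A then Ioi t else Iic t with hBdef
  set piece : Finset (Fin mm) → ℕ → Set ((Fin mm → ℝ) × ℝ) := fun A i =>
    (univ.pi (Bset A i)) ×ˢ {v : ℝ | min (Int.toNat ⌊v * A.card⌋) (A.card - 1) = i} with hpiecedef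
  -- pi-membership characterization
  have hpimem : ∀ (A : Finset (Fin mm)) (i : ℕ), i < A.card → ∀ y : Fin mm → ℝ,
      (y ∈ univ.pi (Bset A i) ↔
        ((∀ j ∈ A, t < y j) ∧ (∀ j ∉ A, y j ≤ t) ∧ p < y ((A.sort (· ≤ ·)).getD i j0))) := by
    intro A i hi y
    have ha : (A.sort (· ≤ ·)).getD i j0 ∈ A := sortIdx_mem hmm A hi
    constructor
    · intro hy
      refine ⟨?_, ?_, ?_⟩
      · intro j hj
        have := hy j (mem_univ j)
        simp only [hBdef] at this
        by_cases hja : j = (A.sort (· ≤ ·)).getD i j0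
        · rw [if_pos hja] at this; exact lt_trans htp this
        · rw [if_neg hja, if_pos hj] at this; exact this
      · intro j hj
        have := hy j (mem_univ j)
        have hja : j ≠ (A.sort (· ≤ ·)).getD i j0 := fun hc => hj (hc ▸ ha)
        simp only [hBdef] at this
        rw [if_neg hja, if_neg hj] at this
        exact this
      · have := hy _ (mem_univ ((A.sort (· ≤ ·)).getD i j0))
        rw [show Bset A i ((A.sort (· ≤ ·)).getD i j0) = Ioi p from by simp [hBdef]] at this
        exact this
    · rintro ⟨h1, h2, h3⟩ j _
      simp only [hBdef]
      by_cases hja : j = (A.sort (· ≤ ·)).getD i j0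
      · rw [if_pos hja, hja]; exact h3
      · rw [if_neg hja]
        by_cases hjA : j ∈ A
        · rw [if_pos hjA]; exact h1 j hjA
        · rw [if_neg hjA]; exact h2 j hjA
  -- event as union of pieces
  have hEeq : {yv : (Fin mm → ℝ) × ℝ | p < Ystar x yv.1 yv.2}
      = ⋃ A ∈ (Finset.univ : Finset (Fin mm)).powerset, ⋃ i ∈ Finset.range A.card, piece A i := by
    ext ⟨y, v⟩
    rw [mem_setOf_eq, ystar_mem_iff x hp0 y v]
    simp only [mem_iUnion, exists_prop]
    constructor
    · rintro ⟨A, hA, i, hi, c1, c2, c3, c4⟩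
      have hic : i < A.card := Finset.mem_range.mp hi
      refine ⟨A, hA, i, hi, ?_⟩
      simp only [hpiecedef, Set.mem_prod, mem_setOf_eq]
      refine ⟨(hpimem A i hic y).mpr ⟨c1, c2, ?_⟩, c3⟩
      rwa [getD_map_sort hmm A y hic] at c4
    · rintro ⟨A, hA, i, hi, hmem⟩
      have hic : i < A.card := Finset.mem_range.mp hi
      simp only [hpiecedef, Set.mem_prod, mem_setOf_eq] at hmem
      obtain ⟨hy, hv⟩ := hmem
      obtain ⟨c1, c2, c3⟩ := (hpimem A i hic y).mp hy
      exact ⟨A, hA, i, hi, c1, c2, hv, by rwa [getD_map_sort hmm A y hic]⟩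
  -- measurability of pieces
  have hidxm : ∀ c : ℕ, Measurable (fun v : ℝ => min (Int.toNat ⌊v * (c : ℝ)⌋) (c - 1)) := by
    intro c
    have h1 : Measurable fun v : ℝ => v * (c : ℝ) := measurable_id.mul_const _
    have h2 : Measurable fun z : ℤ => min (Int.toNat z) (c - 1) := by
      exact measurable_of_countable _
    exact h2.comp (Int.measurable_floor.comp h1)
  have hpiecemble : ∀ (A : Finset (Fin mm)) (i : ℕ), MeasurableSet (piece A i) := by
    intro A i
    simp only [hpiecedef]
    apply MeasurableSet.prod
    · apply MeasurableSet.pi countable_univ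
      intro j _
      simp only [hBdef]
      split_ifs
      · exact measurableSet_Ioi
      · exact measurableSet_Ioi
      · exact measurableSet_Iic
    · exact (hidxm A.card) (measurableSet_singleton i)
  -- pieces are in cylinders
  have hcyl : ∀ (A : Finset (Fin mm)) (i : ℕ), i < A.card → ∀ z ∈ piece A i,
      (∀ j, j ∈ A ↔ t < z.1 j) := by
    rintro A i hic ⟨y, v⟩ hz j
    simp only [hpiecedef, Set.mem_prod, mem_setOf_eq] at hz
    obtain ⟨c1, c2, -⟩ := (hpimem A i hic y).mp hz.1
    constructor
    · intro hj; exact c1 j hj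
    · intro hj; by_contra hcon; exact absurd hj (not_lt.mpr (c2 j hcon))
  -- disjointness
  have houter : (↑(Finset.univ : Finset (Fin mm)).powerset : Set (Finset (Fin mm))).Pairwise
      (Function.onFun Disjoint fun A => ⋃ i ∈ Finset.range A.card, piece A i) := by
    intro A _ A' _ hAA
    rw [Function.onFun]
    rw [Set.disjoint_left]
    intro z hz hz'
    rw [mem_iUnion₂] at hz hz'
    obtain ⟨i, hi, hzi⟩ := hz
    obtain ⟨i', hi', hzi'⟩ := hz'
    apply hAA
    ext j
    rw [hcyl A i (Finset.mem_range.mp hi) z hzi j,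
      ← hcyl A' i' (Finset.mem_range.mp hi') z hzi' j]
  have hinner : ∀ A : Finset (Fin mm), (↑(Finset.range A.card) : Set ℕ).Pairwise
      (Function.onFun Disjoint fun i => piece A i) := by
    intro A i _ i' _ hii
    rw [Function.onFun, Set.disjoint_left]
    intro z hz hz'
    simp only [hpiecedef, Set.mem_prod, mem_setOf_eq] at hz hz'
    exact hii (hz.2.symm.trans hz'.2)
  -- measure of one piece
  have hpiecemeas : ∀ (A : Finset (Fin mm)), A.Nonempty → ∀ i, i < A.card →
      ((Measure.pi fun _ : Fin mm => unif).prod unif) (piece A i)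
        = ENNReal.ofReal ((1 - p) * (1 - t) ^ (A.card - 1) * t ^ (mm - A.card) * (1 / A.card)) := by
    intro A hAne i hic
    simp only [hpiecedef]
    rw [Measure.prod_prod, Measure.pi_pi, unif_vset hic]
    set a : Fin mm := (A.sort (· ≤ ·)).getD i j0 with hadef
    have ha : a ∈ A := sortIdx_mem hmm A hic
    have hprodA : ∏ j ∈ A, unif (Bset A i j)
        = ENNReal.ofReal (1 - p) * ENNReal.ofReal (1 - t) ^ (A.card - 1) := by
      rw [← Finset.mul_prod_erase A _ ha]
      have h1 : unif (Bset A i a) = ENNReal.ofReal (1 - p) := by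
        rw [show Bset A i a = Ioi p from by show (if a = (A.sort (· ≤ ·)).getD i j0 then Ioi p else if a ∈ A then Ioi t else Iic t) = Ioi p; rw [if_pos hadef]]
        exact unif_Ioi (le_of_lt hp0)
      have h2 : ∏ j ∈ A.erase a, unif (Bset A i j) = ENNReal.ofReal (1 - t) ^ (A.card - 1) := by
        rw [Finset.prod_congr rfl (fun j hj => ?_), Finset.prod_const,
          Finset.card_erase_of_mem ha]
        simp only [hBdef]
        obtain ⟨hja, hjA⟩ := Finset.mem_erase.mp hj
        rw [if_neg hja, if_pos hjA]
        exact unif_Ioi ht0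
      rw [h1, h2]
    have hprodAc : ∏ j ∈ Aᶜ, unif (Bset A i j) = ENNReal.ofReal t ^ (mm - A.card) := by
      rw [Finset.prod_congr rfl (fun j hj => ?_), Finset.prod_const, Finset.card_compl,
        Fintype.card_fin]
      simp only [hBdef]
      rw [Finset.mem_compl] at hj
      have hja : j ≠ a := fun hc => hj (hc ▸ ha)
      rw [if_neg hja, if_neg hj]
      exact unif_Iic ht0 (le_of_lt ht1)
    rw [← Finset.prod_mul_prod_compl A, hprodA, hprodAc]
    have hnn1 : (0:ℝ) ≤ 1 - p := by linarith
    have hnn2 : (0:ℝ) ≤ (1 - p) * (1 - t) ^ (A.card - 1) :=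
      mul_nonneg hnn1 (pow_nonneg (by linarith) _)
    have hnn3 : (0:ℝ) ≤ (1 - p) * (1 - t) ^ (A.card - 1) * t ^ (mm - A.card) :=
      mul_nonneg hnn2 (pow_nonneg ht0 _)
    rw [← ENNReal.ofReal_pow (by linarith : (0:ℝ) ≤ 1 - t), ← ENNReal.ofReal_pow ht0,
      ← ENNReal.ofReal_mul hnn1, ← ENNReal.ofReal_mul hnn2,
      ← ENNReal.ofReal_mul hnn3]
  -- inner sums
  have hinnersum : ∀ A ∈ (Finset.univ : Finset (Fin mm)).powerset,
      ∑ i ∈ Finset.range A.card, ((Measure.pi fun _ : Fin mm => unif).prod unif) (piece A i)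
        = ENNReal.ofReal (if A = ∅ then 0 else
            (1 - p) * ((1 - t) ^ (A.card - 1) * t ^ (mm - A.card))) := by
    intro A _
    by_cases hA : A = ∅
    · simp [hA]
    · rw [if_neg hA]
      have hAne : A.Nonempty := Finset.nonempty_of_ne_empty hA
      have hc1 : 1 ≤ A.card := Finset.card_pos.mpr hAne
      rw [Finset.sum_congr rfl (fun i hi => hpiecemeas A hAne i (Finset.mem_range.mp hi)),
        Finset.sum_const, Finset.card_range, nsmul_eq_mul]
      rw [← ENNReal.ofReal_natCast A.card, ← ENNReal.ofReal_mul (by positivity)]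
      congr 1
      have hcne : (A.card : ℝ) ≠ 0 := by positivity
      field_simp
  -- put together
  rw [hEeq, measure_biUnion_finset houter
    (fun A _ => MeasurableSet.biUnion (Finset.range A.card).countable_toSet
      (fun i _ => hpiecemble A i))]
  rw [Finset.sum_congr rfl (fun A hA => by
    rw [measure_biUnion_finset (hinner A) (fun i _ => hpiecemble A i), hinnersum A hA])]
  rw [← ENNReal.ofReal_sum_of_nonneg (fun A _ => by
    split_ifs with h
    · exact le_refl 0
    · exact mul_nonneg (by linarith) (mul_nonneg (pow_nonneg (by linarith) _)
        (pow_nonneg ht0 _)))]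
  congr 1
  have hfac : ∀ A : Finset (Fin mm),
      (if A = ∅ then (0:ℝ) else (1 - p) * ((1 - t) ^ (A.card - 1) * t ^ (mm - A.card)))
      = (1 - p) * (if A = ∅ then 0 else (1 - t) ^ (A.card - 1) * t ^ (mm - A.card)) := by
    intro A; split_ifs <;> ring
  rw [Finset.sum_congr rfl (fun A _ => hfac A), ← Finset.mul_sum, sum_subsets_id ht1]

/-- For integers `n ≥ 2`, `m ≥ 2` and `p ∈ (0,1)`:
`Pr[Y* > p ∧ X_{(1),n} < p ∧ W_{2,n} < p] · Pr[X_{(1),n} < p]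
  ≤ Pr[Y* > p ∧ X_{(1),n} < p] · Pr[X_{(1),n} < p ∧ W_{2,n} < p]`, i.e.
`Pr[Y* > p | X_{(1),n} < p ∧ W_{2,n} < p] ≤ Pr[Y* > p | X_{(1),n} < p]`. -/
theorem stmt12 (n m : ℕ) (hn : 2 ≤ n) (hm : 2 ≤ m) :
    ∀ p ∈ Set.Ioo (0 : ℝ) 1,
      P₁₂ n m {ω : (Fin n → ℝ) × ℝ × (Fin (m - 1) → ℝ) × ℝ |
          p < Ystar ω.1 ω.2.2.1 ω.2.2.2 ∧ kthLargest ω.1 1 < p ∧ Wvar 2 ω.1 ω.2.1 < p} *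
      P₁₂ n m {ω : (Fin n → ℝ) × ℝ × (Fin (m - 1) → ℝ) × ℝ | kthLargest ω.1 1 < p} ≤
      P₁₂ n m {ω : (Fin n → ℝ) × ℝ × (Fin (m - 1) → ℝ) × ℝ |
          p < Ystar ω.1 ω.2.2.1 ω.2.2.2 ∧ kthLargest ω.1 1 < p} *
      P₁₂ n m {ω : (Fin n → ℝ) × ℝ × (Fin (m - 1) → ℝ) × ℝ |
          kthLargest ω.1 1 < p ∧ Wvar 2 ω.1 ω.2.1 < p} := by
  rintro p ⟨hp0, hp1⟩
  have hmm : 1 ≤ m - 1 := by omega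
  have hn0 : 0 < n := by omega
  have hne : (Finset.univ : Finset (Fin n)).Nonempty := ⟨⟨0, by omega⟩, Finset.mem_univ _⟩
  set Mx : (Fin n → ℝ) → ℝ := fun x => Finset.univ.sup' hne x with hMxdef
  set S2x : (Fin n → ℝ) → ℝ := fun x => Finset.univ.inf' hne
    (fun i => ((Finset.univ : Finset (Fin n)).erase i).sup' (erase_nonempty hn i) x) with hS2def
  have hM : ∀ x : Fin n → ℝ, kthLargest x 1 = Mx x := fun x => kth_one hn0 x hne
  have hS2 : ∀ x : Fin n → ℝ, kthLargest x 2 = S2x x := fun x => kth_two hn x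
  have hMm : Measurable Mx := by
    have h := Finset.measurable_sup' (s := Finset.univ) hne
      (f := fun (i : Fin n) (x : Fin n → ℝ) => x i) (fun i _ => measurable_pi_apply i)
    have he : Mx = Finset.univ.sup' hne (fun (i : Fin n) (x : Fin n → ℝ) => x i) :=
      funext fun x => (Finset.sup'_apply hne (fun (i : Fin n) (x : Fin n → ℝ) => x i) x).symm
    rw [he]
    exact h
  have hS2m : Measurable S2x := by
    set g : Fin n → (Fin n → ℝ) → ℝ :=
      fun i x => ((Finset.univ : Finset (Fin n)).erase i).sup' (erase_nonempty hn i) x with hg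
    have hgm : ∀ i ∈ Finset.univ, Measurable (g i) := by
      intro i _
      have h := Finset.measurable_sup' (s := (Finset.univ : Finset (Fin n)).erase i)
        (erase_nonempty hn i) (f := fun (j : Fin n) (x : Fin n → ℝ) => x j)
        (fun j _ => measurable_pi_apply j)
      have he : g i = ((Finset.univ : Finset (Fin n)).erase i).sup' (erase_nonempty hn i)
          (fun (j : Fin n) (x : Fin n → ℝ) => x j) :=
        funext fun x => (Finset.sup'_apply (erase_nonempty hn i) (fun (j : Fin n) (x : Fin n → ℝ) => x j) x).symm
      rw [he]
      exact h
    have h := finset_measurable_inf' (s := Finset.univ) hne (f := g) hgm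
    have he : S2x = Finset.univ.inf' hne g :=
      funext fun x => (Finset.inf'_apply hne g x).symm
    rw [he]
    exact h
  have hMmono : Monotone Mx := by
    intro x x' hxx
    apply Finset.sup'_le
    intro i _
    exact le_trans (hxx i) (Finset.le_sup' _ (Finset.mem_univ i))
  have hS2mono : Monotone S2x := by
    intro x x' hxx
    apply Finset.le_inf'
    intro i _
    refine le_trans (Finset.inf'_le _ (Finset.mem_univ i)) ?_
    apply Finset.sup'_le
    intro j hj
    exact le_trans (hxx j) (Finset.le_sup' _ hj)
  have hS2leM : ∀ x, S2x x ≤ Mx x := by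
    intro x
    obtain ⟨i0, -⟩ := hne
    refine le_trans (Finset.inf'_le _ (Finset.mem_univ i0)) ?_
    apply Finset.sup'_le
    intro j _
    exact Finset.le_sup' _ (Finset.mem_univ j)
  -- clamp
  set cl : ℝ → ℝ := fun s => max 0 (min s p) with hcldef
  have hcl0 : ∀ s, 0 ≤ cl s := fun s => le_max_left _ _
  have hclp : ∀ s, cl s ≤ p := fun s => max_le (le_of_lt hp0) (min_le_right _ _)
  have hclmono : Monotone cl := fun a b hab => max_le_max (le_refl 0) (min_le_min_right _ hab)
  have hcleq : ∀ s, 0 ≤ s → s < p → cl s = s := by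
    intro s h0 h1
    rw [hcldef]
    simp only
    rw [min_eq_left (le_of_lt h1), max_eq_right h0]
  have hclm : Measurable cl := (continuous_const.max (continuous_id.min continuous_const)).measurable
  set F : (Fin n → ℝ) → ℝ := fun x => (1 - p) * ∑ j ∈ Finset.range (m - 1), (cl (Mx x)) ^ j
    with hFdef
  set G : (Fin n → ℝ) → ℝ := fun x => (p - cl (S2x x)) / (1 - cl (S2x x)) with hGdef
  have hF0 : ∀ x, 0 ≤ F x := by
    intro x
    apply mul_nonneg (by linarith)
    exact Finset.sum_nonneg (fun j _ => pow_nonneg (hcl0 _) _)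
  have hG0 : ∀ x, 0 ≤ G x := by
    intro x
    apply div_nonneg
    · linarith [hclp (S2x x)]
    · have := hclp (S2x x); linarith
  have hFb : ∀ x, |F x| ≤ (m - 1 : ℕ) := by
    intro x
    rw [abs_of_nonneg (hF0 x)]
    calc (1 - p) * ∑ j ∈ Finset.range (m - 1), (cl (Mx x)) ^ j
        ≤ 1 * ∑ j ∈ Finset.range (m - 1), (1:ℝ) ^ j := by
          apply mul_le_mul (by linarith) ?_ ?_ zero_le_one
          · apply Finset.sum_le_sum
            intro j _
            apply pow_le_pow_left₀ (hcl0 _)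
            linarith [hclp (Mx x)]
          · exact Finset.sum_nonneg (fun j _ => pow_nonneg (hcl0 _) _)
      _ = (m - 1 : ℕ) := by simp
  have hGb : ∀ x, |G x| ≤ 1 := by
    intro x
    rw [abs_of_nonneg (hG0 x)]
    rw [div_le_one (by linarith [hclp (S2x x)])]
    linarith [hcl0 (S2x x)]
  have hFmono : Monotone F := by
    intro x x' hxx
    apply mul_le_mul_of_nonneg_left ?_ (by linarith)
    apply Finset.sum_le_sum
    intro j _
    exact pow_le_pow_left₀ (hcl0 _) (hclmono (hMmono hxx)) j
  have hGanti : Antitone G := by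
    intro x x' hxx
    have h1 : cl (S2x x) ≤ cl (S2x x') := hclmono (hS2mono hxx)
    have h2 : cl (S2x x') ≤ p := hclp _
    have h3 : 0 ≤ cl (S2x x) := hcl0 _
    rw [hGdef]
    simp only
    rw [div_le_div_iff₀ (by linarith) (by linarith)]
    nlinarith
  have hFm : Measurable F :=
    measurable_const.mul (Finset.measurable_sum _ (fun j _ => (hclm.comp hMm).pow_const j))
  have hGm : Measurable G :=
    (measurable_const.sub (hclm.comp hS2m)).div (measurable_const.sub (hclm.comp hS2m))
  -- measures
  set μx : Measure (Fin n → ℝ) := Measure.pi fun _ : Fin n => unif with hμx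
  set η : Measure (Fin (m-1) → ℝ) := Measure.pi fun _ : Fin (m-1) => unif with hη
  set ρ : Measure (ℝ × (Fin (m-1) → ℝ) × ℝ) := unif.prod (η.prod unif) with hρ
  haveI : IsProbabilityMeasure μx := by rw [hμx]; infer_instance
  haveI : IsProbabilityMeasure η := by rw [hη]; infer_instance
  haveI : IsProbabilityMeasure ρ := by rw [hρ]; infer_instance
  have hP : P₁₂ n m = μx.prod ρ := rfl
  set lam : Measure (Fin n → ℝ) := Measure.pi fun _ : Fin n => volume.restrict (Ico (0:ℝ) p)
    with hlam
  haveI : ∀ i : Fin n, IsFiniteMeasure ((fun _ : Fin n => volume.restrict (Ico (0:ℝ) p)) i) := by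
    intro i
    constructor
    rw [Measure.restrict_apply_univ, Real.volume_Ico]
    exact ENNReal.ofReal_lt_top
  haveI : IsFiniteMeasure lam := by rw [hlam]; exact pi_finite _
  set Box : Set (Fin n → ℝ) := Set.pi univ (fun _ : Fin n => Ico (0:ℝ) p) with hBox
  have hBoxm : MeasurableSet Box := MeasurableSet.pi countable_univ (fun _ _ => measurableSet_Ico)
  have hrestrict : μx.restrict Box = lam := by
    rw [hμx, hBox, pi_restrict _ _ (fun _ => measurableSet_Ico), hlam]
    congr 1
    funext i
    rw [unif]
    rw [Measure.restrict_restrict measurableSet_Ico]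
    congr 1
    rw [inter_eq_left]
    intro z hz
    exact ⟨hz.1, le_trans (le_of_lt hz.2) (le_of_lt hp1)⟩
  set BigBox : Set (Fin n → ℝ) := Set.pi univ (fun _ : Fin n => Icc (0:ℝ) 1) with hBB
  have hBBm : MeasurableSet BigBox := MeasurableSet.pi countable_univ (fun _ _ => measurableSet_Icc)
  have haebox : ∀ᵐ x ∂μx, x ∈ BigBox := by
    have h1 : μx BigBox = 1 := by
      rw [hμx, hBB, Measure.pi_pi]
      have hu : unif (Icc (0:ℝ) 1) = 1 := by
        rw [unif_apply, inter_self, Real.volume_Icc]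
        norm_num
      simp [hu]
    have h2 : μx BigBoxᶜ = 0 := by
      rw [measure_compl hBBm (measure_ne_top _ _), measure_univ, h1, tsub_self]
    rw [ae_iff]
    exact h2
  -- facts for x in the big box
  have hxM0 : ∀ x ∈ BigBox, 0 ≤ Mx x := by
    intro x hx
    obtain ⟨i0, -⟩ := hne
    exact le_trans (hx i0 (mem_univ i0)).1 (Finset.le_sup' _ (Finset.mem_univ i0))
  have hxS20 : ∀ x ∈ BigBox, 0 ≤ S2x x := by
    intro x hx
    apply Finset.le_inf'
    intro i _
    obtain ⟨j0, hj0⟩ := erase_nonempty hn i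
    exact le_trans (hx j0 (mem_univ j0)).1 (Finset.le_sup' _ hj0)
  have hMxlt : ∀ x ∈ BigBox, (Mx x < p ↔ x ∈ Box) := by
    intro x hx
    rw [hMxdef]
    rw [Finset.sup'_lt_iff]
    constructor
    · intro h i _
      exact ⟨(hx i (mem_univ i)).1, h i (Finset.mem_univ i)⟩
    · intro h i _
      exact (h i (mem_univ i)).2
  -- measurability of events
  have hkm : Measurable fun ω : (Fin n → ℝ) × ℝ × (Fin (m-1) → ℝ) × ℝ => kthLargest ω.1 1 := by
    have he : (fun ω : (Fin n → ℝ) × ℝ × (Fin (m-1) → ℝ) × ℝ => kthLargest ω.1 1)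
        = fun ω => Mx ω.1 := funext fun ω => hM ω.1
    rw [he]
    exact hMm.comp measurable_fst
  have hym : Measurable fun ω : (Fin n → ℝ) × ℝ × (Fin (m-1) → ℝ) × ℝ => ω.2.2.1 :=
    measurable_fst.comp (measurable_snd.comp measurable_snd)
  have hvm : Measurable fun ω : (Fin n → ℝ) × ℝ × (Fin (m-1) → ℝ) × ℝ => ω.2.2.2 :=
    measurable_snd.comp (measurable_snd.comp measurable_snd)
  have hum : Measurable fun ω : (Fin n → ℝ) × ℝ × (Fin (m-1) → ℝ) × ℝ => ω.2.1 :=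
    measurable_fst.comp measurable_snd
  have hT2 : MeasurableSet {ω : (Fin n → ℝ) × ℝ × (Fin (m-1) → ℝ) × ℝ | kthLargest ω.1 1 < p} :=
    measurableSet_lt hkm measurable_const
  have hTW : MeasurableSet {ω : (Fin n → ℝ) × ℝ × (Fin (m-1) → ℝ) × ℝ | Wvar 2 ω.1 ω.2.1 < p} := by
    have he : {ω : (Fin n → ℝ) × ℝ × (Fin (m-1) → ℝ) × ℝ | Wvar 2 ω.1 ω.2.1 < p}
        = {ω : (Fin n → ℝ) × ℝ × (Fin (m-1) → ℝ) × ℝ |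
            S2x ω.1 + ω.2.1 * (1 - S2x ω.1) < p} := by
      ext ω
      rw [mem_setOf_eq, mem_setOf_eq, Wvar, hS2]
    rw [he]
    exact measurableSet_lt ((hS2m.comp measurable_fst).add
      (hum.mul (measurable_const.sub (hS2m.comp measurable_fst)))) measurable_const
  have hTY : MeasurableSet
      {ω : (Fin n → ℝ) × ℝ × (Fin (m-1) → ℝ) × ℝ | p < Ystar ω.1 ω.2.2.1 ω.2.2.2} := by
    have hEeq : {ω : (Fin n → ℝ) × ℝ × (Fin (m-1) → ℝ) × ℝ | p < Ystar ω.1 ω.2.2.1 ω.2.2.2}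
        = ⋃ A ∈ (Finset.univ : Finset (Fin (m-1))).powerset, ⋃ i ∈ Finset.range A.card,
           (({ω : (Fin n → ℝ) × ℝ × (Fin (m-1) → ℝ) × ℝ | ∀ j ∈ A, kthLargest ω.1 1 < ω.2.2.1 j} ∩
             {ω : (Fin n → ℝ) × ℝ × (Fin (m-1) → ℝ) × ℝ | ∀ j ∉ A, ω.2.2.1 j ≤ kthLargest ω.1 1}) ∩
            ({ω : (Fin n → ℝ) × ℝ × (Fin (m-1) → ℝ) × ℝ |
                min (Int.toNat ⌊ω.2.2.2 * A.card⌋) (A.card - 1) = i} ∩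
             {ω : (Fin n → ℝ) × ℝ × (Fin (m-1) → ℝ) × ℝ |
                p < ω.2.2.1 ((A.sort (· ≤ ·)).getD i ⟨0, hmm⟩)})) := by
      ext ω
      rw [mem_setOf_eq, ystar_mem_iff ω.1 hp0 ω.2.2.1 ω.2.2.2]
      simp only [mem_iUnion, exists_prop, mem_inter_iff, mem_setOf_eq]
      constructor
      · rintro ⟨A, hA, i, hi, c1, c2, c3, c4⟩
        exact ⟨A, hA, i, hi, ⟨c1, c2⟩, c3,
          by rwa [getD_map_sort hmm A ω.2.2.1 (Finset.mem_range.mp hi)] at c4⟩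
      · rintro ⟨A, hA, i, hi, ⟨c1, c2⟩, c3, c4⟩
        exact ⟨A, hA, i, hi, c1, c2, c3,
          by rwa [getD_map_sort hmm A ω.2.2.1 (Finset.mem_range.mp hi)]⟩
    rw [hEeq]
    apply MeasurableSet.biUnion (Finset.countable_toSet _)
    intro A _
    apply MeasurableSet.biUnion (Finset.countable_toSet _)
    intro i _
    apply MeasurableSet.inter
    · apply MeasurableSet.inter
      · have he : {ω : (Fin n → ℝ) × ℝ × (Fin (m-1) → ℝ) × ℝ |
            ∀ j ∈ A, kthLargest ω.1 1 < ω.2.2.1 j}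
            = ⋂ j ∈ (A : Set (Fin (m-1))), {ω : (Fin n → ℝ) × ℝ × (Fin (m-1) → ℝ) × ℝ |
                kthLargest ω.1 1 < ω.2.2.1 j} := by
          ext ω
          simp [Set.mem_iInter]
        rw [he]
        exact MeasurableSet.biInter (A.countable_toSet)
          (fun j _ => measurableSet_lt hkm ((measurable_pi_apply j).comp hym))
      · have he : {ω : (Fin n → ℝ) × ℝ × (Fin (m-1) → ℝ) × ℝ |
            ∀ j ∉ A, ω.2.2.1 j ≤ kthLargest ω.1 1}
            = ⋂ (j : Fin (m-1)), ⋂ (_ : j ∉ A), {ω : (Fin n → ℝ) × ℝ × (Fin (m-1) → ℝ) × ℝ |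
                ω.2.2.1 j ≤ kthLargest ω.1 1} := by
          ext ω
          simp [Set.mem_iInter]
        rw [he]
        exact MeasurableSet.iInter (fun j => MeasurableSet.iInter
          (fun _ => measurableSet_le ((measurable_pi_apply j).comp hym) hkm))
    · apply MeasurableSet.inter
      · have hidxm : Measurable (fun v : ℝ => min (Int.toNat ⌊v * (A.card : ℝ)⌋) (A.card - 1)) := by
          have h1 : Measurable fun v : ℝ => v * (A.card : ℝ) := measurable_id.mul_const _
          have h2 : Measurable fun z : ℤ => min (Int.toNat z) (A.card - 1) :=
            measurable_of_countable _
          exact h2.comp (Int.measurable_floor.comp h1)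
        exact (hidxm.comp hvm) (measurableSet_singleton i)
      · exact measurableSet_lt measurable_const ((measurable_pi_apply _).comp hym)
  have hT1 : MeasurableSet {ω : (Fin n → ℝ) × ℝ × (Fin (m-1) → ℝ) × ℝ |
      p < Ystar ω.1 ω.2.2.1 ω.2.2.2 ∧ kthLargest ω.1 1 < p ∧ Wvar 2 ω.1 ω.2.1 < p} := by
    have he : {ω : (Fin n → ℝ) × ℝ × (Fin (m-1) → ℝ) × ℝ |
        p < Ystar ω.1 ω.2.2.1 ω.2.2.2 ∧ kthLargest ω.1 1 < p ∧ Wvar 2 ω.1 ω.2.1 < p}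
        = {ω : (Fin n → ℝ) × ℝ × (Fin (m-1) → ℝ) × ℝ | p < Ystar ω.1 ω.2.2.1 ω.2.2.2} ∩
          ({ω : (Fin n → ℝ) × ℝ × (Fin (m-1) → ℝ) × ℝ | kthLargest ω.1 1 < p} ∩
           {ω : (Fin n → ℝ) × ℝ × (Fin (m-1) → ℝ) × ℝ | Wvar 2 ω.1 ω.2.1 < p}) := by
      ext ω
      simp [mem_inter_iff, mem_setOf_eq]
    rw [he]
    exact hTY.inter (hT2.inter hTW)
  have hT3 : MeasurableSet {ω : (Fin n → ℝ) × ℝ × (Fin (m-1) → ℝ) × ℝ |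
      p < Ystar ω.1 ω.2.2.1 ω.2.2.2 ∧ kthLargest ω.1 1 < p} := by
    have he : {ω : (Fin n → ℝ) × ℝ × (Fin (m-1) → ℝ) × ℝ |
        p < Ystar ω.1 ω.2.2.1 ω.2.2.2 ∧ kthLargest ω.1 1 < p}
        = {ω : (Fin n → ℝ) × ℝ × (Fin (m-1) → ℝ) × ℝ | p < Ystar ω.1 ω.2.2.1 ω.2.2.2} ∩
          {ω : (Fin n → ℝ) × ℝ × (Fin (m-1) → ℝ) × ℝ | kthLargest ω.1 1 < p} := by
      ext ω
      simp [mem_inter_iff, mem_setOf_eq]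
    rw [he]
    exact hTY.inter hT2
  have hT4 : MeasurableSet {ω : (Fin n → ℝ) × ℝ × (Fin (m-1) → ℝ) × ℝ |
      kthLargest ω.1 1 < p ∧ Wvar 2 ω.1 ω.2.1 < p} := by
    have he : {ω : (Fin n → ℝ) × ℝ × (Fin (m-1) → ℝ) × ℝ |
        kthLargest ω.1 1 < p ∧ Wvar 2 ω.1 ω.2.1 < p}
        = {ω : (Fin n → ℝ) × ℝ × (Fin (m-1) → ℝ) × ℝ | kthLargest ω.1 1 < p} ∩
          {ω : (Fin n → ℝ) × ℝ × (Fin (m-1) → ℝ) × ℝ | Wvar 2 ω.1 ω.2.1 < p} := by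
      ext ω
      simp [mem_inter_iff, mem_setOf_eq]
    rw [he]
    exact hT2.inter hTW
  -- sections
  have hsec1 : ∀ᵐ x ∂μx, ρ (Prod.mk x ⁻¹' {ω : (Fin n → ℝ) × ℝ × (Fin (m-1) → ℝ) × ℝ |
        p < Ystar ω.1 ω.2.2.1 ω.2.2.2 ∧ kthLargest ω.1 1 < p ∧ Wvar 2 ω.1 ω.2.1 < p})
      = Box.indicator (fun x => ENNReal.ofReal (G x) * ENNReal.ofReal (F x)) x := by
    filter_upwards [haebox] with x hx
    by_cases hMp : Mx x < p
    · have hxB : x ∈ Box := (hMxlt x hx).mp hMp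
      have hpre : Prod.mk x ⁻¹' {ω : (Fin n → ℝ) × ℝ × (Fin (m-1) → ℝ) × ℝ |
          p < Ystar ω.1 ω.2.2.1 ω.2.2.2 ∧ kthLargest ω.1 1 < p ∧ Wvar 2 ω.1 ω.2.1 < p}
          = {u : ℝ | S2x x + u * (1 - S2x x) < p} ×ˢ
            {yv : (Fin (m-1) → ℝ) × ℝ | p < Ystar x yv.1 yv.2} := by
        ext ⟨u, y, v⟩
        simp only [mem_preimage, mem_setOf_eq, mem_prod]
        rw [Wvar, hS2 x, hM x]
        constructor
        · rintro ⟨h1, _, h3⟩; exact ⟨h3, h1⟩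
        · rintro ⟨h3, h1⟩; exact ⟨h1, hMp, h3⟩
      rw [hpre, Measure.prod_prod]
      have hW : unif {u : ℝ | S2x x + u * (1 - S2x x) < p}
          = ENNReal.ofReal ((p - S2x x) / (1 - S2x x)) :=
        w_section (hxS20 x hx) (lt_of_le_of_lt (hS2leM x) hMp) (le_of_lt hp1)
      have hY : (η.prod unif) {yv : (Fin (m-1) → ℝ) × ℝ | p < Ystar x yv.1 yv.2}
          = ENNReal.ofReal ((1 - p) * ∑ j ∈ Finset.range (m-1), (kthLargest x 1) ^ j) :=
        ystar_section hmm x hp0 hp1 (by rw [hM x]; exact hxM0 x hx) (by rw [hM x]; exact hMp)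
      rw [hW, hY, indicator_of_mem hxB]
      have hclS : cl (S2x x) = S2x x := hcleq _ (hxS20 x hx) (lt_of_le_of_lt (hS2leM x) hMp)
      have hclM : cl (Mx x) = Mx x := hcleq _ (hxM0 x hx) hMp
      rw [hGdef, hFdef]
      simp only
      rw [hclS, hclM, hM x]
    · have hxB : x ∉ Box := fun hc => hMp ((hMxlt x hx).mpr hc)
      have hpre : Prod.mk x ⁻¹' {ω : (Fin n → ℝ) × ℝ × (Fin (m-1) → ℝ) × ℝ |
          p < Ystar ω.1 ω.2.2.1 ω.2.2.2 ∧ kthLargest ω.1 1 < p ∧ Wvar 2 ω.1 ω.2.1 < p}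
          = (∅ : Set (ℝ × (Fin (m-1) → ℝ) × ℝ)) := by
        ext ⟨u, y, v⟩
        simp only [mem_preimage, mem_setOf_eq, mem_empty_iff_false, iff_false, not_and]
        intro _ h2
        rw [hM x] at h2
        exact absurd h2 hMp
      rw [hpre, measure_empty, indicator_of_notMem hxB]
  have hsec2 : ∀ᵐ x ∂μx, ρ (Prod.mk x ⁻¹' {ω : (Fin n → ℝ) × ℝ × (Fin (m-1) → ℝ) × ℝ |
        kthLargest ω.1 1 < p})
      = Box.indicator (fun _ => (1 : ENNReal)) x := by
    filter_upwards [haebox] with x hx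
    by_cases hMp : Mx x < p
    · have hxB : x ∈ Box := (hMxlt x hx).mp hMp
      have hpre : Prod.mk x ⁻¹' {ω : (Fin n → ℝ) × ℝ × (Fin (m-1) → ℝ) × ℝ |
          kthLargest ω.1 1 < p} = (univ : Set (ℝ × (Fin (m-1) → ℝ) × ℝ)) := by
        ext ⟨u, y, v⟩
        simp only [mem_preimage, mem_setOf_eq, mem_univ, iff_true]
        rw [hM x]
        exact hMp
      rw [hpre, measure_univ, indicator_of_mem hxB]
    · have hxB : x ∉ Box := fun hc => hMp ((hMxlt x hx).mpr hc)
      have hpre : Prod.mk x ⁻¹' {ω : (Fin n → ℝ) × ℝ × (Fin (m-1) → ℝ) × ℝ |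
          kthLargest ω.1 1 < p} = (∅ : Set (ℝ × (Fin (m-1) → ℝ) × ℝ)) := by
        ext ⟨u, y, v⟩
        simp only [mem_preimage, mem_setOf_eq, mem_empty_iff_false, iff_false]
        rw [hM x]
        exact hMp
      rw [hpre, measure_empty, indicator_of_notMem hxB]
  have hsec3 : ∀ᵐ x ∂μx, ρ (Prod.mk x ⁻¹' {ω : (Fin n → ℝ) × ℝ × (Fin (m-1) → ℝ) × ℝ |
        p < Ystar ω.1 ω.2.2.1 ω.2.2.2 ∧ kthLargest ω.1 1 < p})
      = Box.indicator (fun x => ENNReal.ofReal (F x)) x := by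
    filter_upwards [haebox] with x hx
    by_cases hMp : Mx x < p
    · have hxB : x ∈ Box := (hMxlt x hx).mp hMp
      have hpre : Prod.mk x ⁻¹' {ω : (Fin n → ℝ) × ℝ × (Fin (m-1) → ℝ) × ℝ |
          p < Ystar ω.1 ω.2.2.1 ω.2.2.2 ∧ kthLargest ω.1 1 < p}
          = (univ : Set ℝ) ×ˢ {yv : (Fin (m-1) → ℝ) × ℝ | p < Ystar x yv.1 yv.2} := by
        ext ⟨u, y, v⟩
        simp only [mem_preimage, mem_setOf_eq, mem_prod, mem_univ, true_and]
        rw [hM x]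
        constructor
        · rintro ⟨h1, -⟩; exact h1
        · intro h1; exact ⟨h1, hMp⟩
      rw [hpre, Measure.prod_prod, measure_univ, one_mul]
      have hY : (η.prod unif) {yv : (Fin (m-1) → ℝ) × ℝ | p < Ystar x yv.1 yv.2}
          = ENNReal.ofReal ((1 - p) * ∑ j ∈ Finset.range (m-1), (kthLargest x 1) ^ j) :=
        ystar_section hmm x hp0 hp1 (by rw [hM x]; exact hxM0 x hx) (by rw [hM x]; exact hMp)
      rw [hY, indicator_of_mem hxB]
      have hclM : cl (Mx x) = Mx x := hcleq _ (hxM0 x hx) hMp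
      rw [hFdef]
      simp only
      rw [hclM, hM x]
    · have hxB : x ∉ Box := fun hc => hMp ((hMxlt x hx).mpr hc)
      have hpre : Prod.mk x ⁻¹' {ω : (Fin n → ℝ) × ℝ × (Fin (m-1) → ℝ) × ℝ |
          p < Ystar ω.1 ω.2.2.1 ω.2.2.2 ∧ kthLargest ω.1 1 < p}
          = (∅ : Set (ℝ × (Fin (m-1) → ℝ) × ℝ)) := by
        ext ⟨u, y, v⟩
        simp only [mem_preimage, mem_setOf_eq, mem_empty_iff_false, iff_false, not_and]
        intro _ h2
        rw [hM x] at h2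
        exact absurd h2 hMp
      rw [hpre, measure_empty, indicator_of_notMem hxB]
  have hsec4 : ∀ᵐ x ∂μx, ρ (Prod.mk x ⁻¹' {ω : (Fin n → ℝ) × ℝ × (Fin (m-1) → ℝ) × ℝ |
        kthLargest ω.1 1 < p ∧ Wvar 2 ω.1 ω.2.1 < p})
      = Box.indicator (fun x => ENNReal.ofReal (G x)) x := by
    filter_upwards [haebox] with x hx
    by_cases hMp : Mx x < p
    · have hxB : x ∈ Box := (hMxlt x hx).mp hMp
      have hpre : Prod.mk x ⁻¹' {ω : (Fin n → ℝ) × ℝ × (Fin (m-1) → ℝ) × ℝ |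
          kthLargest ω.1 1 < p ∧ Wvar 2 ω.1 ω.2.1 < p}
          = {u : ℝ | S2x x + u * (1 - S2x x) < p} ×ˢ
            (univ : Set ((Fin (m-1) → ℝ) × ℝ)) := by
        ext ⟨u, y, v⟩
        simp only [mem_preimage, mem_setOf_eq, mem_prod, mem_univ, and_true]
        rw [Wvar, hS2 x, hM x]
        constructor
        · rintro ⟨-, h3⟩; exact h3
        · intro h3; exact ⟨hMp, h3⟩
      rw [hpre, Measure.prod_prod, measure_univ, mul_one]
      have hW : unif {u : ℝ | S2x x + u * (1 - S2x x) < p}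
          = ENNReal.ofReal ((p - S2x x) / (1 - S2x x)) :=
        w_section (hxS20 x hx) (lt_of_le_of_lt (hS2leM x) hMp) (le_of_lt hp1)
      rw [hW, indicator_of_mem hxB]
      have hclS : cl (S2x x) = S2x x := hcleq _ (hxS20 x hx) (lt_of_le_of_lt (hS2leM x) hMp)
      rw [hGdef]
      simp only
      rw [hclS]
    · have hxB : x ∉ Box := fun hc => hMp ((hMxlt x hx).mpr hc)
      have hpre : Prod.mk x ⁻¹' {ω : (Fin n → ℝ) × ℝ × (Fin (m-1) → ℝ) × ℝ |
          kthLargest ω.1 1 < p ∧ Wvar 2 ω.1 ω.2.1 < p}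
          = (∅ : Set (ℝ × (Fin (m-1) → ℝ) × ℝ)) := by
        ext ⟨u, y, v⟩
        simp only [mem_preimage, mem_setOf_eq, mem_empty_iff_false, iff_false, not_and]
        intro h2
        rw [hM x] at h2
        exact absurd h2 hMp
      rw [hpre, measure_empty, indicator_of_notMem hxB]
  -- convert to integrals over lam
  have hconv : ∀ (T : Set ((Fin n → ℝ) × ℝ × (Fin (m-1) → ℝ) × ℝ))
      (f : (Fin n → ℝ) → ENNReal), MeasurableSet T →
      (∀ᵐ x ∂μx, ρ (Prod.mk x ⁻¹' T) = Box.indicator f x) →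
      P₁₂ n m T = ∫⁻ x, f x ∂lam := by
    intro T f hTm hae
    rw [hP, Measure.prod_apply hTm, lintegral_congr_ae hae, lintegral_indicator hBoxm,
      ← hrestrict]
  rw [hconv _ _ hT1 hsec1, hconv _ _ hT2 hsec2, hconv _ _ hT3 hsec3, hconv _ _ hT4 hsec4]
  have hGF : (fun x => ENNReal.ofReal (G x) * ENNReal.ofReal (F x))
      = fun x => ENNReal.ofReal (G x * F x) :=
    funext fun x => (ENNReal.ofReal_mul (hG0 x)).symm
  rw [hGF, lintegral_one]
  have hFi : Integrable F lam := integrable_of_bdd hFm.aestronglyMeasurable hFb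
  have hGi : Integrable G lam := integrable_of_bdd hGm.aestronglyMeasurable hGb
  have hGFi : Integrable (fun x => G x * F x) lam := by
    refine integrable_of_bdd (hGm.mul hFm).aestronglyMeasurable
      (C := 1 * ((m-1 : ℕ) : ℝ)) (fun x => ?_)
    rw [abs_mul]
    exact mul_le_mul (hGb x) (hFb x) (abs_nonneg _) zero_le_one
  rw [← ofReal_integral_eq_lintegral_ofReal hGFi
      (ae_of_all _ (fun x => mul_nonneg (hG0 x) (hF0 x))),
    ← ofReal_integral_eq_lintegral_ofReal hFi (ae_of_all _ hF0),
    ← ofReal_integral_eq_lintegral_ofReal hGi (ae_of_all _ hG0)]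
  have h1 : (volume.restrict (Ico (0:ℝ) p)) Set.univ = ENNReal.ofReal p := by
    rw [Measure.restrict_apply_univ, Real.volume_Ico, sub_zero]
  have hlamuniv : lam Set.univ = ENNReal.ofReal (p ^ n) := by
    rw [hlam, Measure.pi_univ]
    simp only [h1]
    rw [Finset.prod_const, Finset.card_univ, Fintype.card_fin,
      ← ENNReal.ofReal_pow (le_of_lt hp0)]
  rw [hlamuniv,
    ← ENNReal.ofReal_mul (integral_nonneg (fun x => mul_nonneg (hG0 x) (hF0 x))),
    ← ENNReal.ofReal_mul (integral_nonneg hF0)]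
  apply ENNReal.ofReal_le_ofReal
  have hh := harris n (fun _ : Fin n => volume.restrict (Ico (0:ℝ) p)) (fun i => inferInstance)
    F G hFmono hGanti hFm hGm ((m-1 : ℕ) : ℝ) 1 hFb hGb
  have hcomm : (fun x => G x * F x) = fun x => F x * G x := funext fun x => mul_comm _ _
  rw [hcomm]
  have htr : (lam Set.univ).toReal = p ^ n := by
    rw [hlamuniv, ENNReal.toReal_ofReal (pow_nonneg (le_of_lt hp0) n)]
  calc (∫ x, F x * G x ∂lam) * p ^ n
      = (∫ x, F x * G x ∂lam) * (lam Set.univ).toReal := by rw [htr]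
    _ ≤ (∫ x, F x ∂lam) * ∫ x, G x ∂lam := by
        rw [← hlam] at hh
        exact hh
end

section
/- Let m ≥ 2, n ≥ 2, and ℓ ≥ 1 be integers with ℓ − 1 ≤ n/2. Then 1 − (1 − (m−1)/(mn−1))^{ℓ−1} ≥ (1 − ln 2)·(ℓ−1)/(2n). -/
set_option maxHeartbeats 1000000


lemma stmt13_aux (t : ℝ) (ht0 : 0 ≤ t) (ht4 : t ≤ 1 / 4) :
    (4 / 5 : ℝ) * t ≤ 1 - 1 / (1 + t) := by
  have hpos : (0 : ℝ) < 1 + t := by linarith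
  have he : 1 - 1 / (1 + t) = t / (1 + t) := by field_simp; ring
  rw [he, le_div_iff₀ hpos]
  nlinarith

/-- For integers `m ≥ 2`, `n ≥ 2`, `ℓ ≥ 1` with `ℓ - 1 ≤ n/2`:
`1 - (1 - (m-1)/(mn-1))^{ℓ-1} ≥ (1 - ln 2)·(ℓ-1)/(2n)`. -/
theorem stmt13 (m n ℓ : ℕ) (hm : 2 ≤ m) (hn : 2 ≤ n) (hℓ : 1 ≤ ℓ)
    (hℓn : (ℓ : ℝ) - 1 ≤ (n : ℝ) / 2) :
    (1 - Real.log 2) * ((ℓ : ℝ) - 1) / (2 * (n : ℝ)) ≤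
      1 - (1 - ((m : ℝ) - 1) / ((m : ℝ) * (n : ℝ) - 1)) ^ (ℓ - 1) := by
  set M : ℝ := (m : ℝ) with hM
  set N : ℝ := (n : ℝ) with hN
  have hM2 : (2 : ℝ) ≤ M := by rw [hM]; exact_mod_cast hm
  have hN2 : (2 : ℝ) ≤ N := by rw [hN]; exact_mod_cast hn
  set k : ℕ := ℓ - 1 with hk
  have hK : ((k : ℝ)) = (ℓ : ℝ) - 1 := by
    have : (k : ℕ) + 1 = ℓ := Nat.succ_pred_eq_of_pos hℓ
    have := congrArg (fun t : ℕ => (t : ℝ)) this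
    push_cast at this
    linarith
  set x : ℝ := 1 / (2 * N) with hx
  have hxpos : 0 < x := by positivity
  have hx1 : x ≤ 1 / 4 := by
    rw [hx, div_le_div_iff₀ (by linarith) (by norm_num)]
    linarith
  have hKx : (k : ℝ) * x ≤ 1 / 4 := by
    rw [hx, hK]
    rw [mul_one_div, div_le_div_iff₀ (by linarith) (by norm_num)]
    linarith
  have hK0 : (0 : ℝ) ≤ (k : ℝ) := Nat.cast_nonneg k
  have hMN : (1 : ℝ) < M * N := by nlinarith
  -- p ≥ x
  have hp_ge : x ≤ (M - 1) / (M * N - 1) := by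
    rw [hx, div_le_div_iff₀ (by linarith) (by linarith)]
    nlinarith
  have hp_le : (M - 1) / (M * N - 1) ≤ 1 := by
    rw [div_le_one (by linarith)]
    nlinarith
  -- monotonicity of powers
  have hstep1 : (1 - (M - 1) / (M * N - 1)) ^ k ≤ (1 - x) ^ k := by
    apply pow_le_pow_left₀ (by linarith) (by linarith)
  -- Bernoulli: 1 + k x ≤ (1+x)^k
  have hbern : 1 + (k : ℝ) * x ≤ (1 + x) ^ k := by
    have := one_add_mul_le_pow (a := x) (by linarith) k
    linarith
  have hprod : (1 - x) ^ k * (1 + x) ^ k ≤ 1 := by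
    rw [← mul_pow]
    have h1 : (1 - x) * (1 + x) = 1 - x ^ 2 := by ring
    rw [h1]
    have h2 : (0 : ℝ) ≤ 1 - x ^ 2 := by nlinarith
    calc (1 - x ^ 2) ^ k ≤ 1 ^ k := pow_le_pow_left₀ h2 (by nlinarith) k
    _ = 1 := one_pow k
  have hpow_nonneg : (0 : ℝ) ≤ (1 - x) ^ k := pow_nonneg (by linarith) k
  have hstep2 : (1 - x) ^ k ≤ 1 / (1 + (k : ℝ) * x) := by
    rw [le_div_iff₀ (by nlinarith)]
    calc (1 - x) ^ k * (1 + (k : ℝ) * x) ≤ (1 - x) ^ k * (1 + x) ^ k := by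
          exact mul_le_mul_of_nonneg_left hbern hpow_nonneg
      _ ≤ 1 := hprod
  -- 1 - 1/(1+kx) ≥ (4/5) k x
  have hstep3 : (4 / 5 : ℝ) * ((k : ℝ) * x) ≤ 1 - 1 / (1 + (k : ℝ) * x) := by
    exact stmt13_aux _ (mul_nonneg hK0 hxpos.le) hKx
  have hlog : (1 / 5 : ℝ) ≤ Real.log 2 := by
    have := Real.log_two_gt_d9
    linarith
  have hℓ1 : (0 : ℝ) ≤ (ℓ : ℝ) - 1 := by
    have : (1 : ℝ) ≤ (ℓ : ℝ) := by exact_mod_cast hℓ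
    linarith
  have hfinal : (1 - Real.log 2) * ((ℓ : ℝ) - 1) / (2 * N) ≤ (4 / 5 : ℝ) * ((k : ℝ) * x) := by
    have h2 : (4 / 5 : ℝ) * ((k : ℝ) * x) = (4 / 5 : ℝ) * ((ℓ : ℝ) - 1) / (2 * N) := by
      rw [hK, hx]; ring
    rw [h2]
    gcongr
    linarith
  calc (1 - Real.log 2) * ((ℓ : ℝ) - 1) / (2 * N)
      ≤ (4 / 5 : ℝ) * ((k : ℝ) * x) := hfinal
    _ ≤ 1 - 1 / (1 + (k : ℝ) * x) := hstep3
    _ ≤ 1 - (1 - x) ^ k := by linarith [hstep2]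
    _ ≤ 1 - (1 - (M - 1) / (M * N - 1)) ^ k := by linarith [hstep1]
end

section
/- Let x and y be real numbers with x ∈ [0, 1/2], y ≥ 1, and x·y ≤ 1/2. Then 1 − (1 − x)^y ≥ (1 − ln 2)·x·y, where (1−x)^y denotes the real power. -/
/-- For reals `x ∈ [0, 1/2]`, `y ≥ 1` with `x·y ≤ 1/2`:
`1 - (1-x)^y ≥ (1 - ln 2)·x·y`, where `(1-x)^y` is a real power. -/
theorem stmt14 (x y : ℝ) (hx : x ∈ Set.Icc (0 : ℝ) (1 / 2)) (hy : 1 ≤ y)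
    (hxy : x * y ≤ 1 / 2) :
    (1 - Real.log 2) * x * y ≤ 1 - (1 - x) ^ y := by
  obtain ⟨hx0, hx2⟩ := hx
  have hy0 : (0:ℝ) ≤ y := le_trans zero_le_one hy
  have ht0 : 0 ≤ x * y := mul_nonneg hx0 hy0
  have h1x : (0:ℝ) < 1 - x := by linarith
  have hlog : Real.log (1 - x) ≤ -x := by
    have := Real.log_le_sub_one_of_pos h1x
    linarith
  have h1 : (1 - x) ^ y ≤ Real.exp (-(x*y)) := by
    rw [Real.rpow_def_of_pos h1x]
    apply Real.exp_le_exp.mpr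
    calc Real.log (1 - x) * y ≤ -x * y := mul_le_mul_of_nonneg_right hlog hy0
    _ = -(x*y) := by ring
  have ht1 : (0:ℝ) < 1 + x * y := by linarith
  have h2 : Real.exp (-(x*y)) ≤ 1 / (1 + x*y) := by
    rw [Real.exp_neg, one_div]
    exact inv_anti₀ ht1 (by linarith [Real.add_one_le_exp (x*y)])
  have hln : Real.log 2 > 0.6931471803 := Real.log_two_gt_d9
  have key : (1 - Real.log 2) * x * y ≤ 1 - 1 / (1 + x * y) := by
    have heq : 1 - 1 / (1 + x * y) = (x * y) / (1 + x * y) := by field_simp; ring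
    rw [heq, le_div_iff₀ ht1]
    nlinarith [mul_nonneg ht0 ht0]
  linarith
end

section
/- Let q > 1 be a real number and let v_1, v_2 be i.i.d. random variables with the equal-revenue distribution ER. Then Pr[v_1 + v_2 ≥ 2q] = 2/(2q−1) + ((q − 1/2)·ln(2q−1) − q)/(q²·(2q−1)). -/
open MeasureTheory Set
open scoped ENNReal

private lemma er_lint_Ioc {t : ℝ} (ht : 1 ≤ t) :
    ∫⁻ x in Ioc (1:ℝ) t, ENNReal.ofReal ((x ^ 2)⁻¹) = ENNReal.ofReal (1 - 1 / t) := by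
  have hcont : ContinuousOn (fun x : ℝ => (x ^ 2)⁻¹) (Icc 1 t) := by
    apply ContinuousOn.inv₀ (by fun_prop)
    intro x hx
    have : (0:ℝ) < x := lt_of_lt_of_le one_pos hx.1
    positivity
  have hint : IntegrableOn (fun x : ℝ => (x ^ 2)⁻¹) (Ioc 1 t) := by
    exact (hcont.integrableOn_compact isCompact_Icc).mono_set Ioc_subset_Icc_self
  rw [← MeasureTheory.ofReal_integral_eq_lintegral_ofReal hint]
  · congr 1
    rw [← intervalIntegral.integral_of_le ht]
    have hderiv : ∀ x ∈ uIcc (1:ℝ) t, HasDerivAt (fun y : ℝ => -y⁻¹) ((x ^ 2)⁻¹) x := by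
      intro x hx
      rw [uIcc_of_le ht] at hx
      have hx0 : x ≠ 0 := by
        have : (0:ℝ) < x := lt_of_lt_of_le one_pos hx.1
        exact this.ne'
      simpa using (hasDerivAt_inv hx0).fun_neg
    rw [intervalIntegral.integral_eq_sub_of_hasDerivAt hderiv
      ((hcont.mono (by rw [uIcc_of_le ht])).intervalIntegrable)]
    field_simp
    ring
  · filter_upwards [ae_restrict_mem measurableSet_Ioc] with x hx
    have : (0:ℝ) < x := lt_trans one_pos hx.1
    positivity

/-- Let `μ` be the equal-revenue distribution, i.e. the probability measure
on `ℝ` with `Pr[V > t] = 1/t` for all `t ≥ 1`.  For `q > 1` and `v₁, v₂` i.i.d. with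
distribution `μ`:
`Pr[v₁ + v₂ ≥ 2q] = 2/(2q-1) + ((q - 1/2)·ln(2q-1) - q)/(q²·(2q-1))`. -/
theorem stmt17 (μ : Measure ℝ) [IsProbabilityMeasure μ]
    (hER : ∀ t : ℝ, 1 ≤ t → μ (Set.Ioi t) = ENNReal.ofReal (1 / t))
    (q : ℝ) (hq : 1 < q) :
    ((μ.prod μ) {v : ℝ × ℝ | 2 * q ≤ v.1 + v.2}).toReal =
      2 / (2 * q - 1) +
        ((q - 1 / 2) * Real.log (2 * q - 1) - q) / (q ^ 2 * (2 * q - 1)) := by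
  set a : ℝ := 2 * q with ha
  set b : ℝ := 2 * q - 1 with hb
  have hb1 : 1 < b := by simp [hb]; linarith
  have hab : b < a := by simp [ha, hb]
  have ha0 : (0:ℝ) < a := by positivity
  -- the density
  set f : ℝ → ℝ≥0∞ := (Ioi (1:ℝ)).indicator (fun x => ENNReal.ofReal ((x ^ 2)⁻¹)) with hf
  have f_meas : Measurable f := by
    exact (ENNReal.measurable_ofReal.comp (by fun_prop)).indicator measurableSet_Ioi
  -- the measure μ equals the withDensity measure
  have hIic : ∀ t : ℝ, 1 ≤ t → μ (Iic t) = ENNReal.ofReal (1 - 1 / t) := by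
    intro t ht
    rw [← compl_Ioi, measure_compl measurableSet_Ioi (measure_ne_top μ _), measure_univ,
      hER t ht, ← ENNReal.ofReal_one, ← ENNReal.ofReal_sub _ (by positivity)]
  have hmu : μ = volume.withDensity f := by
    refine Measure.ext_of_Iic μ _ (fun t => ?_)
    rw [withDensity_apply _ measurableSet_Iic, hf,
      lintegral_indicator measurableSet_Ioi, Measure.restrict_restrict measurableSet_Ioi,
      Ioi_inter_Iic]
    rcases le_or_gt 1 t with ht | ht
    · rw [hIic t ht, er_lint_Ioc ht]
    · have h2 : μ (Iic 1) = 0 := by rw [hIic 1 le_rfl]; simp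
      have h1 : μ (Iic t) = 0 :=
        le_antisymm (le_trans (measure_mono (Iic_subset_Iic.2 ht.le)) h2.le) zero_le
      rw [h1, Ioc_eq_empty (not_lt.2 ht.le), Measure.restrict_empty, lintegral_zero_measure]
  have hb0 : (0:ℝ) < b := lt_trans one_pos hb1
  have hatom : ∀ r : ℝ, μ {r} = 0 := by
    intro r
    have hz : volume.restrict ({r} : Set ℝ) = 0 := Measure.restrict_eq_zero.2 (by simp)
    rw [hmu, withDensity_apply _ (measurableSet_singleton r), hz, lintegral_zero_measure]
  have hIci : ∀ r : ℝ, 1 ≤ r → μ (Ici r) = ENNReal.ofReal (1 / r) := by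
    intro r hr
    have hsplit : Ici r = {r} ∪ Ioi r := by
      ext x; simp [le_iff_lt_or_eq, eq_comm, or_comm]
    have : μ (Ici r) = μ (Ioi r) := by
      refine le_antisymm ?_ (measure_mono Ioi_subset_Ici_self)
      calc μ (Ici r) ≤ μ {r} + μ (Ioi r) := by rw [hsplit]; exact measure_union_le _ _
        _ = μ (Ioi r) := by rw [hatom r, zero_add]
    rw [this, hER r hr]
  have hIci1 : ∀ r : ℝ, r ≤ 1 → μ (Ici r) = 1 := by
    intro r hr
    refine le_antisymm prob_le_one ?_
    calc (1:ℝ≥0∞) = μ (Ioi 1) := by rw [hER 1 le_rfl]; simp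
      _ ≤ μ (Ici r) := measure_mono (fun x hx => le_trans hr (le_of_lt hx))
  -- the inner measure as explicit function
  set g : ℝ → ℝ≥0∞ := fun x => if x ≤ b then ENNReal.ofReal (1 / (a - x)) else 1 with hgdef
  have hgval : ∀ x : ℝ, μ (Ici (a - x)) = g x := by
    intro x
    rcases le_or_gt x b with hx | hx
    · rw [hgdef]; simp only [if_pos hx]
      exact hIci (a - x) (by simp only [ha, hb] at hx ⊢; linarith)
    · rw [hgdef]; simp only [if_neg (not_le.2 hx)]
      exact hIci1 (a - x) (by simp only [ha, hb] at hx ⊢; linarith)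
  -- antiderivative for the middle integral
  set F : ℝ → ℝ := fun x => (Real.log x - Real.log (a - x)) / a ^ 2 - a⁻¹ * x⁻¹ with hFdef
  have hfin : ∀ᵐ x ∂(volume : Measure ℝ), f x < ⊤ := ae_of_all _ (fun x => by
    by_cases h : x ∈ Ioi (1:ℝ) <;> simp [hf, h])
  have key : ∫⁻ x, g x ∂μ = ENNReal.ofReal (F b - F 1) + ENNReal.ofReal (1 / b) := by
    rw [hmu, lintegral_withDensity_eq_lintegral_mul_non_measurable _ f_meas hfin]
    have hind : (f * g) = (Ioi (1:ℝ)).indicator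
        (fun x => ENNReal.ofReal ((x ^ 2)⁻¹) * g x) := by
      funext x; by_cases h : x ∈ Ioi (1:ℝ) <;> simp [hf, h]
    rw [hind, lintegral_indicator measurableSet_Ioi,
      ← Ioc_union_Ioi_eq_Ioi hb1.le,
      lintegral_union measurableSet_Ioi Ioc_disjoint_Ioi_same]
    have hmid : ∫⁻ x in Ioc (1:ℝ) b, ENNReal.ofReal ((x ^ 2)⁻¹) * g x
        = ENNReal.ofReal (F b - F 1) := by
      have e1 : ∀ x ∈ Ioc (1:ℝ) b,
          ENNReal.ofReal ((x ^ 2)⁻¹) * g x = ENNReal.ofReal ((x ^ 2 * (a - x))⁻¹) := by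
        intro x hx
        rw [hgdef]; simp only [if_pos hx.2]
        rw [← ENNReal.ofReal_mul (by positivity), one_div, mul_inv]
      rw [setLIntegral_congr_fun measurableSet_Ioc e1]
      have hcont2 : ContinuousOn (fun x : ℝ => (x ^ 2 * (a - x))⁻¹) (Icc 1 b) := by
        apply ContinuousOn.inv₀ (by fun_prop)
        intro x hx
        have hx0 : (0:ℝ) < x := lt_of_lt_of_le one_pos hx.1
        have hax : (0:ℝ) < a - x := by
          have := hx.2; simp only [ha, hb] at *; linarith
        positivity
      have hint2 : IntegrableOn (fun x : ℝ => (x ^ 2 * (a - x))⁻¹) (Ioc 1 b) :=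
        (hcont2.integrableOn_compact isCompact_Icc).mono_set Ioc_subset_Icc_self
      have hnn2 : 0 ≤ᵐ[volume.restrict (Ioc (1:ℝ) b)]
          (fun x : ℝ => (x ^ 2 * (a - x))⁻¹) := by
        filter_upwards [ae_restrict_mem measurableSet_Ioc] with x hx
        have hax : (0:ℝ) ≤ a - x := by
          have := hx.2; simp only [ha, hb] at *; linarith
        exact inv_nonneg.2 (mul_nonneg (by positivity) hax)
      rw [← MeasureTheory.ofReal_integral_eq_lintegral_ofReal hint2 hnn2]
      congr 1
      rw [← intervalIntegral.integral_of_le hb1.le]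
      have hd : ∀ x ∈ uIcc (1:ℝ) b, HasDerivAt F ((x ^ 2 * (a - x))⁻¹) x := by
        intro x hx
        rw [uIcc_of_le hb1.le] at hx
        have hx0 : (0:ℝ) < x := lt_of_lt_of_le one_pos hx.1
        have hax : (0:ℝ) < a - x := by
          have := hx.2; simp only [ha, hb] at *; linarith
        have h1 : HasDerivAt (fun y : ℝ => Real.log y) x⁻¹ x := Real.hasDerivAt_log hx0.ne'
        have h2 : HasDerivAt (fun y : ℝ => Real.log (a - y)) (-1 / (a - x)) x :=
          ((hasDerivAt_id x).const_sub a).log hax.ne'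
        have h3 : HasDerivAt (fun y : ℝ => a⁻¹ * y⁻¹) (a⁻¹ * -(x ^ 2)⁻¹) x :=
          (hasDerivAt_inv hx0.ne').const_mul a⁻¹
        have h4 := ((h1.fun_sub h2).div_const (a ^ 2)).fun_sub h3
        refine h4.congr_deriv ?_
        field_simp
        ring
      rw [intervalIntegral.integral_eq_sub_of_hasDerivAt hd
        ((hcont2.mono (by rw [uIcc_of_le hb1.le])).intervalIntegrable)]
    have htail : ∫⁻ x in Ioi b, ENNReal.ofReal ((x ^ 2)⁻¹) * g x
        = ENNReal.ofReal (1 / b) := by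
      have e2 : ∀ x ∈ Ioi b, ENNReal.ofReal ((x ^ 2)⁻¹) * g x = f x := by
        intro x hx
        rw [hgdef]; simp only [if_neg (not_le.2 (mem_Ioi.1 hx))]
        rw [mul_one, hf, indicator_of_mem (mem_Ioi.2 (lt_trans hb1 hx))]
      rw [setLIntegral_congr_fun measurableSet_Ioi e2,
        ← withDensity_apply _ measurableSet_Ioi, ← hmu, hER b hb1.le]
    rw [hmid, htail]
  -- put everything together
  have hSm : MeasurableSet {v : ℝ × ℝ | a ≤ v.1 + v.2} :=
    measurableSet_le measurable_const (measurable_fst.add measurable_snd)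
  have hpre : ∀ x : ℝ, (Prod.mk x ⁻¹' {v : ℝ × ℝ | a ≤ v.1 + v.2}) = Ici (a - x) := by
    intro x; ext y; simp [sub_le_iff_le_add, add_comm]
  rw [Measure.prod_apply hSm]
  simp only [hpre]
  rw [lintegral_congr hgval, key]
  -- final real computation
  have hFval : F b - F 1 = 2 * Real.log b / a ^ 2 + 1 / a - 1 / (a * b) := by
    have e1 : a - b = 1 := by simp only [ha, hb]; ring
    have e2 : a - 1 = b := by simp only [ha, hb]
    rw [hFdef]
    simp only [e1, e2, Real.log_one]
    field_simp
    ring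
  have hL : 0 ≤ Real.log b := Real.log_nonneg hb1.le
  have hFnn : 0 ≤ F b - F 1 := by
    rw [hFval]
    have h1 : 1 / (a * b) ≤ 1 / a := by
      apply div_le_div_of_nonneg_left one_pos.le ha0
      nlinarith
    have h2 : 0 ≤ 2 * Real.log b / a ^ 2 := by positivity
    linarith
  rw [← ENNReal.ofReal_add hFnn (by positivity),
    ENNReal.toReal_ofReal (add_nonneg hFnn (by positivity))]
  rw [hFval]
  have hq0 : q ≠ 0 := by positivity
  have hbne : b ≠ 0 := hb0.ne'
  have hane : a ≠ 0 := ha0.ne'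
  rw [ha, hb] at *
  field_simp
  ring
end

section
/- Let m ≥ 2 and n ≥ 4m be integers, and let (v_{ij})_{i∈[n], j∈[m]} be i.i.d. random variables with the equal-revenue distribution ER. Then Σ_{j=1}^{m} E[ max_{i∈[n]} ( v_{ij} · 1{ there exists k ≠ j with v_{ik} > v_{ij} } ) ] ≥ m·√(mn)/14. -/
open MeasureTheory Set
open scoped ENNReal

namespace Stmt19Aux


lemma map_eval {ι : Type*} [Fintype ι] {α : ι → Type*} [∀ i, MeasurableSpace (α i)]
    (μs : ∀ i, Measure (α i)) [∀ i, IsProbabilityMeasure (μs i)] (i : ι) :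
    (Measure.pi μs).map (fun f => f i) = μs i := by
  classical
  refine Measure.ext fun s hs => ?_
  rw [Measure.map_apply (measurable_pi_apply i) hs]
  have h : (fun f : ∀ j, α j => f i) ⁻¹' s
      = Set.pi univ (Function.update (fun j => (univ : Set (α j))) i s) := by
    ext f
    simp only [Set.mem_preimage, Set.mem_pi, Set.mem_univ, forall_true_left]
    constructor
    · intro hf j
      rcases eq_or_ne j i with rfl | hj
      · simpa using hf
      · simp [Function.update_of_ne hj]
    · intro hf
      simpa using hf i
  rw [h, Measure.pi_pi]
  refine (Finset.prod_eq_single i (fun b _ hb => ?_) (by simp)).trans (by simp)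
  rw [Function.update_of_ne hb]
  exact measure_univ

lemma map_eval_pair {ι : Type*} [Fintype ι] {β : Type*} [MeasurableSpace β]
    (μ' : Measure β) [IsProbabilityMeasure μ'] [SigmaFinite μ'] {j k : ι} (hjk : j ≠ k) :
    (Measure.pi (fun _ : ι => μ')).map (fun f => (f j, f k)) = μ'.prod μ' := by
  classical
  refine (Measure.prod_eq fun s t hs ht => ?_).symm
  rw [Measure.map_apply (by fun_prop) (hs.prod ht)]
  have h : (fun f : ι → β => (f j, f k)) ⁻¹' (s ×ˢ t)
      = Set.pi univ (fun l => if l = j then s else if l = k then t else univ) := by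
    ext f
    simp only [Set.mem_preimage, Set.mem_prod, Set.mem_pi, Set.mem_univ, forall_true_left]
    constructor
    · rintro ⟨h1, h2⟩ l
      split_ifs with h h'
      · subst h; exact h1
      · subst h'; exact h2
      · trivial
    · intro h
      refine ⟨by simpa using h j, ?_⟩
      have := h k
      rwa [if_neg (Ne.symm hjk), if_pos rfl] at this
  rw [h, Measure.pi_pi, ← Finset.mul_prod_erase Finset.univ _ (Finset.mem_univ j)]
  simp only [if_pos rfl]
  congr 1
  rw [Finset.prod_eq_single_of_mem k (Finset.mem_erase.2 ⟨Ne.symm hjk, Finset.mem_univ k⟩)]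
  · rw [if_neg (Ne.symm hjk), if_pos rfl]
  · intro b _ hbk
    rcases eq_or_ne b j with rfl | hbj
    · simp_all
    · simp [hbj, hbk]



section ERfacts
variable {μ : Measure ℝ} [IsProbabilityMeasure μ]
variable (hER : ∀ t : ℝ, 1 ≤ t → μ (Set.Ioi t) = ENNReal.ofReal (1 / t))

include hER

lemma mu_Iic_one : μ (Iic 1) = 0 := by
  have h := hER 1 le_rfl
  simp only [div_one, ENNReal.ofReal_one] at h
  have h2 := prob_compl_eq_one_sub (μ := μ) (measurableSet_Ioi (a := (1:ℝ)))
  rw [compl_Ioi] at h2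
  rw [h2, h, tsub_self]

lemma mu_Ioc (t : ℝ) (ht : 1 ≤ t) : μ (Ioc t (2*t)) = ENNReal.ofReal (1/(2*t)) := by
  have ht0 : (0:ℝ) < t := lt_of_lt_of_le one_pos ht
  have h2t : (1:ℝ) ≤ 2*t := by linarith
  have hsub : Ioi (2*t) ⊆ Ioi t := Ioi_subset_Ioi (by linarith)
  have h1 : Ioc t (2*t) = Ioi t \ Ioi (2*t) := by
    rw [diff_eq, compl_Ioi]
    ext x
    constructor
    · rintro ⟨h1, h2⟩; exact ⟨h1, h2⟩
    · rintro ⟨h1, h2⟩; exact ⟨h1, h2⟩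
  rw [h1, measure_diff hsub measurableSet_Ioi.nullMeasurableSet (measure_ne_top μ _),
    hER t ht, hER _ h2t, ← ENNReal.ofReal_sub _ (by positivity)]
  congr 1
  field_simp
  ring

lemma mu_Iic (t : ℝ) (ht : 1 ≤ t) : μ (Iic t) = ENNReal.ofReal (1 - 1/t) := by
  have h2 := prob_compl_eq_one_sub (μ := μ) (measurableSet_Ioi (a := t))
  rw [compl_Ioi] at h2
  rw [h2, hER t ht, ← ENNReal.ofReal_one, ← ENNReal.ofReal_sub _ (by positivity)]

lemma integrable_sqrt : Integrable Real.sqrt μ := by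
  refine ⟨Real.continuous_sqrt.measurable.aestronglyMeasurable, ?_⟩
  rw [hasFiniteIntegral_iff_ofReal (Filter.Eventually.of_forall fun x => Real.sqrt_nonneg x)]
  rw [lintegral_eq_lintegral_meas_lt μ (Filter.Eventually.of_forall fun x => Real.sqrt_nonneg x)
    Real.continuous_sqrt.measurable.aemeasurable]
  have hsplit : (Ioi (0:ℝ)) = Ioc (0:ℝ) 1 ∪ Ioi 1 := (Ioc_union_Ioi_eq_Ioi zero_le_one).symm
  rw [hsplit, lintegral_union measurableSet_Ioi (Ioc_disjoint_Ioi le_rfl)]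
  have h1 : ∫⁻ t in Ioc (0:ℝ) 1, μ {a | t < Real.sqrt a} ≤ 1 := by
    calc ∫⁻ t in Ioc (0:ℝ) 1, μ {a | t < Real.sqrt a}
        ≤ ∫⁻ _ in Ioc (0:ℝ) 1, 1 := setLIntegral_mono measurable_const (fun t _ => prob_le_one)
      _ = 1 := by simp
  have hint : IntegrableOn (fun t : ℝ => t ^ (-2:ℝ)) (Ioi (1:ℝ)) :=
    integrableOn_Ioi_rpow_of_lt (by norm_num) one_pos
  have h2 : ∫⁻ t in Ioi (1:ℝ), μ {a | t < Real.sqrt a}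
      ≤ ∫⁻ t in Ioi (1:ℝ), ENNReal.ofReal (t^(-2:ℝ)) := by
    refine setLIntegral_mono (by fun_prop) (fun t ht => ?_)
    have ht1 : (1:ℝ) ≤ t := le_of_lt ht
    have ht0 : (0:ℝ) < t := lt_of_lt_of_le one_pos ht1
    have hsub : {a : ℝ | t < Real.sqrt a} ⊆ Ioi (t^2) := by
      intro a ha
      simp only [Set.mem_setOf_eq] at ha
      exact (Real.lt_sqrt ht0.le).mp ha
    calc μ {a : ℝ | t < Real.sqrt a} ≤ μ (Ioi (t^2)) := measure_mono hsub
      _ = ENNReal.ofReal (1/(t^2)) := hER _ (by nlinarith)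
      _ = ENNReal.ofReal (t^(-2:ℝ)) := by
          rw [Real.rpow_neg ht0.le, Real.rpow_two, one_div]
  have h3 : ∫⁻ t in Ioi (1:ℝ), ENNReal.ofReal (t^(-2:ℝ)) < ⊤ := by
    rw [← ofReal_integral_eq_lintegral_ofReal hint
      ((ae_restrict_iff' measurableSet_Ioi).2 (Filter.Eventually.of_forall fun t ht =>
        Real.rpow_nonneg (le_of_lt (lt_trans one_pos ht)) _))]
    exact ENNReal.ofReal_lt_top
  calc _ ≤ (1 : ℝ≥0∞) + ∫⁻ t in Ioi (1:ℝ), ENNReal.ofReal (t^(-2:ℝ)) := add_le_add h1 h2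
    _ < ⊤ := ENNReal.add_lt_top.2 ⟨ENNReal.one_lt_top, h3⟩

end ERfacts

lemma bernoulli_bound (x : ℝ) (hx0 : 0 ≤ x) (hx1 : x ≤ 1) (N : ℕ) :
    (1-x)^N ≤ 1/(1+(N:ℝ)*x) := by
  have hd : (0:ℝ) < 1 + (N:ℝ)*x := by positivity
  rw [le_div_iff₀ hd]
  have h1 : 1 + (N:ℝ)*x ≤ (1+x)^N := one_add_mul_le_pow (by linarith) N
  have h2 : (1-x)^N * (1+x)^N = (1-x^2)^N := by
    rw [← mul_pow]
    congr 1
    ring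
  have h3 : (1-x^2)^N ≤ 1 := pow_le_one₀ (by nlinarith) (by nlinarith)
  calc (1-x)^N * (1+(N:ℝ)*x) ≤ (1-x)^N * (1+x)^N :=
        mul_le_mul_of_nonneg_left h1 (pow_nonneg (by linarith) _)
    _ = (1-x^2)^N := h2
    _ ≤ 1 := h3

set_option maxHeartbeats 2000000 in
open Classical in
lemma key {μ : Measure ℝ} [IsProbabilityMeasure μ]
    (hER : ∀ t : ℝ, 1 ≤ t → μ (Set.Ioi t) = ENNReal.ofReal (1 / t))
    (n m : ℕ) (hm : 2 ≤ m) (hn : 4 * m ≤ n) (j : Fin m) :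
    Real.sqrt ((m : ℝ) * (n : ℝ)) / 14 ≤
      ∫ v : Fin n → Fin m → ℝ,
        (⨆ i : Fin n, if ∃ k, k ≠ j ∧ v i j < v i k then v i j else 0)
          ∂(Measure.pi fun _ : Fin n => Measure.pi fun _ : Fin m => μ) := by
  have hn8 : 8 ≤ n := by omega
  have hnpos : 0 < n := by omega
  haveI : NeZero n := ⟨by omega⟩
  set ν : Measure (Fin m → ℝ) := Measure.pi fun _ : Fin m => μ with hνdef
  set P : Measure (Fin n → Fin m → ℝ) := Measure.pi fun _ : Fin n => ν with hPdef
  set S : ℝ := Real.sqrt ((m : ℝ) * (n : ℝ)) with hSdef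
  have hmn16 : (16:ℝ) ≤ (m:ℝ) * n := by
    have h2 : (2:ℝ) ≤ m := by exact_mod_cast hm
    have h8 : (8:ℝ) ≤ n := by exact_mod_cast hn8
    nlinarith
  have hS2 : S^2 = (m:ℝ) * n := Real.sq_sqrt (by positivity)
  have hS4 : (4:ℝ) ≤ S := by
    have : (4:ℝ) = Real.sqrt 16 := by
      rw [show (16:ℝ) = 4^2 by norm_num, Real.sqrt_sq (by norm_num)]
    rw [this]
    exact Real.sqrt_le_sqrt hmn16
  have hSpos : (0:ℝ) < S := by linarith
  set T : ℝ := max (S/12) 1 with hTdef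
  have hT1 : (1:ℝ) ≤ T := le_max_right _ _
  have hT0 : (0:ℝ) < T := by linarith
  have hTS : S/12 ≤ T := le_max_left _ _
  have h2T1 : (1:ℝ) ≤ 2*T := by linarith
  set r : ℝ := 1/(2*T) with hrdef
  have hr0 : (0:ℝ) < r := by positivity
  have hr12 : r ≤ 1/2 := by
    rw [hrdef]
    rw [div_le_div_iff₀ (by linarith) (by norm_num)]
    linarith
  set E : ℝ := (1-r)^(m-1) with hEdef
  have hE0 : (0:ℝ) ≤ E := pow_nonneg (by linarith) _
  have hE1 : E ≤ 1 := pow_le_one₀ (by linarith) (by linarith)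
  set p : ℝ := r * (1 - E) with hpdef
  have hp0 : (0:ℝ) ≤ p := by nlinarith
  have hp1 : p ≤ 1/2 := by nlinarith
  -- the row event
  set C : Set (Fin m → ℝ) :=
    ((fun w : Fin m → ℝ => w j) ⁻¹' (Ioc T (2*T))) ∩
      (⋃ k : Fin m, ⋃ (_ : k ≠ j), ((fun w : Fin m → ℝ => w k) ⁻¹' (Ioi (2*T)))) with hCdef
  have hCmem : ∀ w : Fin m → ℝ,
      w ∈ C ↔ (T < w j ∧ w j ≤ 2*T) ∧ ∃ k, k ≠ j ∧ 2*T < w k := by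
    intro w
    simp only [hCdef, Set.mem_inter_iff, Set.mem_preimage, Set.mem_Ioc, Set.mem_iUnion,
      Set.mem_Ioi]
    tauto
  have hCmeas : MeasurableSet C := by
    refine MeasurableSet.inter ((measurable_pi_apply j) measurableSet_Ioc) ?_
    exact MeasurableSet.iUnion fun k => MeasurableSet.iUnion fun _ =>
      (measurable_pi_apply k) measurableSet_Ioi
  have hB1 : ν ((fun w : Fin m → ℝ => w j) ⁻¹' (Ioc T (2*T))) = ENNReal.ofReal r := by
    rw [← Measure.map_apply (measurable_pi_apply j) measurableSet_Ioc,
      map_eval (fun _ : Fin m => μ) j, mu_Ioc hER T hT1]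
  set B2 : Set (Fin m → ℝ) :=
    Set.pi univ (fun k => if k = j then Ioc T (2*T) else Iic (2*T)) with hB2def
  have hB2meas : MeasurableSet B2 := by
    refine MeasurableSet.univ_pi fun k => ?_
    split_ifs
    · exact measurableSet_Ioc
    · exact measurableSet_Iic
  have hB2sub : B2 ⊆ (fun w : Fin m → ℝ => w j) ⁻¹' (Ioc T (2*T)) := by
    intro w hw
    have := hw j (Set.mem_univ j)
    simpa using this
  have hCdiff : C = ((fun w : Fin m → ℝ => w j) ⁻¹' (Ioc T (2*T))) \ B2 := by
    ext w
    rw [hCmem w]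
    simp only [Set.mem_diff, Set.mem_preimage, Set.mem_Ioc, hB2def, Set.mem_pi, Set.mem_univ,
      forall_true_left]
    constructor
    · rintro ⟨h1, k, hkj, hk⟩
      refine ⟨h1, fun hall => ?_⟩
      have := hall k
      rw [if_neg hkj] at this
      simp only [Set.mem_Iic] at this
      linarith
    · rintro ⟨h1, h2⟩
      refine ⟨h1, ?_⟩
      push_neg at h2
      obtain ⟨k, hk⟩ := h2
      rcases eq_or_ne k j with rfl | hkj
      · rw [if_pos rfl] at hk
        exact absurd (Set.mem_Ioc.mpr h1) hk
      · rw [if_neg hkj] at hk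
        simp only [Set.mem_Iic, not_le] at hk
        exact ⟨k, hkj, hk⟩
  have hB2v : ν B2 = ENNReal.ofReal r * (ENNReal.ofReal (1-r))^(m-1) := by
    rw [hB2def, hνdef, Measure.pi_pi,
      ← Finset.mul_prod_erase Finset.univ _ (Finset.mem_univ j)]
    rw [if_pos rfl, mu_Ioc hER T hT1]
    congr 1
    rw [Finset.prod_congr rfl (fun k hk => by rw [if_neg (Finset.ne_of_mem_erase hk)])]
    rw [Finset.prod_const, Finset.card_erase_of_mem (Finset.mem_univ j), Finset.card_univ,
      Fintype.card_fin, mu_Iic hER _ h2T1, hrdef]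
  have hνC : ν C = ENNReal.ofReal p := by
    rw [hCdiff, measure_diff hB2sub hB2meas.nullMeasurableSet (measure_ne_top ν _), hB1, hB2v,
      ← ENNReal.ofReal_pow (by linarith), ← ENNReal.ofReal_mul hr0.le,
      ← ENNReal.ofReal_sub _ (by positivity)]
    rw [hpdef, hEdef]
    congr 1
    ring
  -- the full event
  set D : Set (Fin n → Fin m → ℝ) := ⋃ i : Fin n, (fun v : Fin n → Fin m → ℝ => v i) ⁻¹' C
    with hDdef
  have hDmeas : MeasurableSet D :=
    MeasurableSet.iUnion fun i => (measurable_pi_apply i) hCmeas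
  have hq1 : (1-p)^n ≤ 1 := pow_le_one₀ (by linarith) (by linarith)
  have hq0 : (0:ℝ) ≤ (1-p)^n := pow_nonneg (by linarith) _
  have hDc : P Dᶜ = ENNReal.ofReal ((1-p)^n) := by
    have hDcompl : Dᶜ = Set.pi univ (fun _ : Fin n => Cᶜ) := by
      ext v
      simp only [hDdef, Set.mem_compl_iff, Set.mem_iUnion, Set.mem_preimage, not_exists,
        Set.mem_pi, Set.mem_univ, forall_true_left]
    have hcompl : ν Cᶜ = ENNReal.ofReal (1-p) := by
      rw [prob_compl_eq_one_sub hCmeas, hνC, ← ENNReal.ofReal_one,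
        ← ENNReal.ofReal_sub _ hp0]
    rw [hDcompl, hPdef, Measure.pi_pi, Finset.prod_const, Finset.card_univ, Fintype.card_fin,
      hcompl, ← ENNReal.ofReal_pow (by linarith)]
  have hPD : (P D).toReal = 1 - (1-p)^n := by
    have h1 : P D = 1 - ENNReal.ofReal ((1-p)^n) := by
      rw [← compl_compl D, prob_compl_eq_one_sub hDmeas.compl, hDc]
    rw [h1, ← ENNReal.ofReal_one, ← ENNReal.ofReal_sub _ hq0,
      ENNReal.toReal_ofReal (by linarith)]
  -- key numeric inequality
  have hq7 : (1-p)^n ≤ 1/7 := by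
    rcases le_or_gt (S/12) 1 with hA | hB
    · -- small case: T = 1, r = 1/2
      have hTeq : T = 1 := max_eq_right hA
      have hre : r = 1/2 := by rw [hrdef, hTeq]; norm_num
      have hEle : E ≤ 1/2 := by
        rw [hEdef, hre]
        calc ((1:ℝ) - 1/2)^(m-1) ≤ ((1:ℝ) - 1/2)^1 :=
              pow_le_pow_of_le_one (by norm_num) (by norm_num) (by omega)
          _ = 1/2 := by norm_num
      have hp4 : 1/4 ≤ p := by rw [hpdef, hre]; nlinarith
      calc (1-p)^n ≤ (3/4:ℝ)^n := pow_le_pow_left₀ (by linarith) (by linarith) n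
        _ ≤ (3/4:ℝ)^8 := pow_le_pow_of_le_one (by norm_num) (by norm_num) hn8
        _ ≤ 1/7 := by norm_num
    · -- large case: T = S/12
      have hTeq : T = S/12 := max_eq_left hB.le
      have hrS : r * S = 6 := by
        rw [hrdef, hTeq]
        field_simp
        ring
      set s : ℝ := ((m:ℝ) - 1) * r with hsdef
      have hs0 : 0 < s := by
        have : (1:ℝ) ≤ (m:ℝ) - 1 := by
          have : (2:ℝ) ≤ (m:ℝ) := by exact_mod_cast hm
          linarith
        nlinarith
      have hEber : E ≤ 1/(1+s) := by
        have h := bernoulli_bound r hr0.le (by linarith) (m-1)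
        rw [hEdef]
        have hcast : ((m-1 : ℕ) : ℝ) = (m:ℝ) - 1 := by
          have : (1:ℕ) ≤ m := by omega
          push_cast [Nat.cast_sub this]
          ring
        rwa [hcast, ← hsdef] at h
      have hplow : r * s / (1+s) ≤ p := by
        rw [hpdef]
        rw [div_le_iff₀ (by linarith)]
        have : E * (1+s) ≤ 1 := by
          rw [← le_div_iff₀ (by linarith)]
          exact hEber
        nlinarith
      have hnr : (12:ℝ) ≤ (n:ℝ) * r := by
        have hn2S : 2*S ≤ (n:ℝ) := by
          have hc : (4:ℝ)*(m:ℝ) ≤ (n:ℝ) := by exact_mod_cast hn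
          have hnn : (0:ℝ) ≤ (n:ℝ) := Nat.cast_nonneg n
          nlinarith [sq_nonneg ((n:ℝ) - 2*S)]
        have h6 : (n:ℝ)*r*S = 6*(n:ℝ) := by rw [mul_assoc, hrS]; ring
        nlinarith [mul_pos hSpos hr0]
      have hkey : 6 + 6*s ≤ (n:ℝ) * r * s := by
        rcases le_or_gt 1 s with hs1 | hs1
        · nlinarith
        · have hm2 : (2:ℝ) ≤ (m:ℝ) := by exact_mod_cast hm
          have h36 : (m:ℝ) * ((n:ℝ) * r * s) = 36 * ((m:ℝ) - 1) := by
            rw [hsdef]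
            linear_combination ((m:ℝ)-1)*(r*S+6)*hrS - ((m:ℝ)-1)*r^2*hS2
          have h18 : (18:ℝ) ≤ (n:ℝ) * r * s := by nlinarith
          linarith
      have hnp : (6:ℝ) ≤ (n:ℝ) * p := by
        have h1 : (n:ℝ) * (r*s/(1+s)) ≤ (n:ℝ) * p :=
          mul_le_mul_of_nonneg_left hplow (Nat.cast_nonneg n)
        have h2 : (6:ℝ) ≤ (n:ℝ) * (r*s/(1+s)) := by
          rw [← mul_div_assoc, le_div_iff₀ (by linarith)]
          nlinarith [hkey]
        linarith
      calc (1-p)^n ≤ 1/(1+(n:ℝ)*p) := bernoulli_bound p hp0 (by linarith) n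
        _ ≤ 1/7 := one_div_le_one_div_of_le (by norm_num) (by linarith)
  
  -- the integrand
  set f : (Fin n → Fin m → ℝ) → ℝ :=
    fun v => ⨆ i : Fin n, if ∃ k, k ≠ j ∧ v i j < v i k then v i j else 0 with hfdef
  have hfmeas : Measurable f := by
    refine Measurable.iSup fun i => ?_
    refine Measurable.ite ?_ (by fun_prop) measurable_const
    have hset : {v : Fin n → Fin m → ℝ | ∃ k, k ≠ j ∧ v i j < v i k}
        = ⋃ k : Fin m, ({v : Fin n → Fin m → ℝ | k ≠ j} ∩ {v | v i j < v i k}) := by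
      ext v
      simp only [Set.mem_setOf_eq, Set.mem_iUnion, Set.mem_inter_iff]
    rw [hset]
    exact MeasurableSet.iUnion fun k => MeasurableSet.inter (MeasurableSet.const _)
      (measurableSet_lt (by fun_prop) (by fun_prop))
  have hcoord : ∀ (i : Fin n) (k : Fin m),
      MeasurePreserving (fun v : Fin n → Fin m → ℝ => v i k) P μ := by
    intro i k
    have h1 : MeasurePreserving (fun v : Fin n → Fin m → ℝ => v i) P ν :=
      ⟨measurable_pi_apply i, map_eval (fun _ : Fin n => ν) i⟩
    have h2 : MeasurePreserving (fun w : Fin m → ℝ => w k) ν μ :=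
      ⟨measurable_pi_apply k, map_eval (fun _ : Fin m => μ) k⟩
    exact h2.comp h1
  have hae : ∀ᵐ v ∂P, ∀ i k, 1 < v i k := by
    rw [ae_all_iff]
    intro i
    rw [ae_all_iff]
    intro k
    rw [ae_iff]
    have hset : {v : Fin n → Fin m → ℝ | ¬ (1 < v i k)}
        = (fun v : Fin n → Fin m → ℝ => v i k) ⁻¹' (Iic 1) := by
      ext v
      simp [not_lt]
    rw [hset, (hcoord i k).measure_preimage measurableSet_Iic.nullMeasurableSet]
    exact mu_Iic_one hER
  have hsup_le : ∀ (v : Fin n → Fin m → ℝ) (i : Fin n),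
      (if ∃ k, k ≠ j ∧ v i j < v i k then v i j else 0) ≤ f v := by
    intro v i
    simp only [hfdef]
    exact le_ciSup (f := fun i : Fin n => if ∃ k, k ≠ j ∧ v i j < v i k then v i j else 0)
      (Set.Finite.bddAbove (Set.finite_range _)) i
  have hf0ae : ∀ᵐ v ∂P, 0 ≤ f v := by
    filter_upwards [hae] with v hv
    have hle := hsup_le v ⟨0, hnpos⟩
    by_cases hcond : ∃ k, k ≠ j ∧ v ⟨0, hnpos⟩ j < v ⟨0, hnpos⟩ k
    · rw [if_pos hcond] at hle
      have := hv ⟨0, hnpos⟩ j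
      linarith
    · rw [if_neg hcond] at hle
      linarith
  set g : (Fin n → Fin m → ℝ) → ℝ :=
    fun v => ∑ i : Fin n, ∑ k ∈ Finset.univ.erase j, Real.sqrt (v i j) * Real.sqrt (v i k)
    with hgdef
  have hg0 : ∀ v, 0 ≤ g v := fun v =>
    Finset.sum_nonneg fun i _ => Finset.sum_nonneg fun k _ =>
      mul_nonneg (Real.sqrt_nonneg _) (Real.sqrt_nonneg _)
  have hgint : Integrable g P := by
    refine integrable_finset_sum _ (fun i _ => integrable_finset_sum _ (fun k hk => ?_))
    have hkj : k ≠ j := Finset.ne_of_mem_erase hk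
    have hpair : MeasurePreserving (fun v : Fin n → Fin m → ℝ => (v i j, v i k)) P
        (μ.prod μ) := by
      have h1 : MeasurePreserving (fun v : Fin n → Fin m → ℝ => v i) P ν :=
        ⟨measurable_pi_apply i, map_eval (fun _ : Fin n => ν) i⟩
      have h2 : MeasurePreserving (fun w : Fin m → ℝ => (w j, w k)) ν (μ.prod μ) :=
        ⟨by fun_prop, map_eval_pair μ hkj.symm⟩
      exact h2.comp h1
    have hprod : Integrable (fun z : ℝ × ℝ => Real.sqrt z.1 * Real.sqrt z.2) (μ.prod μ) :=
      (integrable_sqrt hER).mul_prod (integrable_sqrt hER)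
    have hres := (hpair.integrable_comp hprod.aestronglyMeasurable).mpr hprod
    simpa [Function.comp_def] using hres
  have hfint : Integrable f P := by
    refine Integrable.mono hgint hfmeas.aestronglyMeasurable ?_
    filter_upwards [hae, hf0ae] with v hv hf0
    have hfg : f v ≤ g v := by
      simp only [hfdef, hgdef]
      refine ciSup_le fun i => ?_
      by_cases hcond : ∃ k, k ≠ j ∧ v i j < v i k
      · rw [if_pos hcond]
        obtain ⟨k0, hk0j, hlt⟩ := hcond
        have hvj : (0:ℝ) < v i j := lt_trans one_pos (hv i j)
        have h2 : Real.sqrt (v i j) * Real.sqrt (v i j) = v i j := Real.mul_self_sqrt hvj.le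
        have h1 : v i j ≤ Real.sqrt (v i j) * Real.sqrt (v i k0) := by
          nlinarith [Real.sqrt_nonneg (v i j), Real.sqrt_le_sqrt hlt.le]
        calc v i j ≤ Real.sqrt (v i j) * Real.sqrt (v i k0) := h1
          _ ≤ ∑ k ∈ Finset.univ.erase j, Real.sqrt (v i j) * Real.sqrt (v i k) :=
              Finset.single_le_sum
                (f := fun k => Real.sqrt (v i j) * Real.sqrt (v i k))
                (fun k _ => mul_nonneg (Real.sqrt_nonneg _) (Real.sqrt_nonneg _))
                (Finset.mem_erase.2 ⟨hk0j, Finset.mem_univ _⟩)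
          _ ≤ ∑ i' : Fin n, ∑ k ∈ Finset.univ.erase j,
                Real.sqrt (v i' j) * Real.sqrt (v i' k) :=
              Finset.single_le_sum
                (f := fun i' => ∑ k ∈ Finset.univ.erase j,
                  Real.sqrt (v i' j) * Real.sqrt (v i' k))
                (fun i' _ => Finset.sum_nonneg fun k _ =>
                  mul_nonneg (Real.sqrt_nonneg _) (Real.sqrt_nonneg _))
                (Finset.mem_univ i)
      · rw [if_neg hcond]
        exact Finset.sum_nonneg fun i' _ => Finset.sum_nonneg fun k _ =>
          mul_nonneg (Real.sqrt_nonneg _) (Real.sqrt_nonneg _)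
    rw [Real.norm_eq_abs, Real.norm_eq_abs, abs_of_nonneg hf0, abs_of_nonneg (hg0 v)]
    exact hfg
  have hlow : (T * (P D).toReal) ≤ ∫ v, f v ∂P := by
    have hind : ∫ v, Set.indicator D (fun _ => T) v ∂P = (P D).toReal * T := by
      rw [integral_indicator_const _ hDmeas]
      simp [smul_eq_mul, measureReal_def]
    rw [mul_comm, ← hind]
    refine integral_mono_of_nonneg ?_ hfint ?_
    · filter_upwards with v
      exact Set.indicator_nonneg (fun _ _ => by linarith) v
    · filter_upwards [hf0ae] with v hf0
      by_cases hvD : v ∈ D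
      · rw [Set.indicator_of_mem hvD]
        obtain ⟨i, hi⟩ : ∃ i, v i ∈ C := by
          simpa only [hDdef, Set.mem_iUnion, Set.mem_preimage] using hvD
        rw [hCmem (v i)] at hi
        obtain ⟨⟨h1, h2⟩, k, hkj, hk⟩ := hi
        have hcond : ∃ k', k' ≠ j ∧ v i j < v i k' := ⟨k, hkj, by linarith⟩
        have hle := hsup_le v i
        rw [if_pos hcond] at hle
        linarith
      · rw [Set.indicator_of_notMem hvD]
        exact hf0
  calc S / 14 = (S/12) * (6/7) := by ring
    _ ≤ T * (1 - (1-p)^n) := by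
        apply mul_le_mul hTS (by linarith) (by norm_num) (by linarith)
    _ = T * (P D).toReal := by rw [hPD]
    _ ≤ ∫ v, f v ∂P := hlow


end Stmt19Aux

open Classical in
/-- Let `μ` be the equal-revenue distribution, i.e. the probability measure
on `ℝ` with `Pr[V > t] = 1/t` for all `t ≥ 1`.  For integers `m ≥ 2` and `n ≥ 4m`, and
`(v_{ij})_{i ∈ [n], j ∈ [m]}` i.i.d. with distribution `μ`:
`Σ_{j=1}^m E[max_{i ∈ [n]} (v_{ij} · 1{∃ k ≠ j, v_{ik} > v_{ij}})] ≥ m·√(mn)/14`. -/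
theorem stmt19 (μ : Measure ℝ) [IsProbabilityMeasure μ]
    (hER : ∀ t : ℝ, 1 ≤ t → μ (Set.Ioi t) = ENNReal.ofReal (1 / t))
    (n m : ℕ) (hm : 2 ≤ m) (hn : 4 * m ≤ n) :
    (m : ℝ) * Real.sqrt ((m : ℝ) * (n : ℝ)) / 14 ≤
      ∑ j : Fin m, ∫ v : Fin n → Fin m → ℝ,
        (⨆ i : Fin n, if ∃ k, k ≠ j ∧ v i j < v i k then v i j else 0)
          ∂(Measure.pi fun _ : Fin n => Measure.pi fun _ : Fin m => μ) := by
  have hkey := Stmt19Aux.key hER n m hm hn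
  calc (m : ℝ) * Real.sqrt ((m : ℝ) * (n : ℝ)) / 14
      = ∑ _j : Fin m, Real.sqrt ((m : ℝ) * (n : ℝ)) / 14 := by
        rw [Finset.sum_const, Finset.card_univ, Fintype.card_fin, nsmul_eq_mul]
        ring
    _ ≤ _ := Finset.sum_le_sum fun j _ => hkey j
end
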